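/- arXiv:2410.22607 — 9 statements merged into one kernel-verified Lean document; each statement's English description precedes it below -/
import Mathlib

section
/- Let (V, B) be a packing design PD_λ(v,k,t) with exactly n blocks. For each i ∈ {0,…,n} let N_i denote the number of points of V whose frequency (number of blocks containing them) is exactly i. Then Σ_{i=1}^{n} C(i, λ+1) · N_i ≤ (t-1) · C(n, λ+1). -/
open scoped Classical

/-- A packing design PD_λ(v,k,t): a multiset of k-subsets of `Fin v` such that
every t-subset of points is contained in at most λ blocks. -/
def IsPD (v k t lam : ℕ) (B : Multiset (Finset (Fin v))) : Prop :=
  (∀ b ∈ B, b.card = k) ∧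
  ∀ T : Finset (Fin v), T.card = t → B.countP (fun b => T ⊆ b) ≤ lam

/-- Frequency of a point: the number of blocks (with multiplicity) containing it. -/
def freq {v : ℕ} (B : Multiset (Finset (Fin v))) (x : Fin v) : ℕ :=
  B.countP (fun b => x ∈ b)

lemma countP_coe_eq_card {α : Type*} (l : List α) (p : α → Prop) [DecidablePred p] :
    Multiset.countP p ↑l = (Finset.univ.filter (fun i : Fin l.length => p (l.get i))).card := by
  have h : (l : Multiset α) = Multiset.map l.get (Finset.univ : Finset (Fin l.length)).val := by
    show _ = Multiset.map l.get ↑(List.finRange l.length)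
    rw [Multiset.map_coe, List.map_get_finRange]
  rw [h, Multiset.countP_map]
  rfl

theorem stmt1 (v k t lam n : ℕ) (ht : 2 ≤ t) (htk : t ≤ k) (hkv : k ≤ v) (hlam : 1 ≤ lam)
    (B : Multiset (Finset (Fin v))) (hB : IsPD v k t lam B) (hn : Multiset.card B = n) :
    ∑ i ∈ Finset.Icc 1 n,
        i.choose (lam + 1) * (Finset.univ.filter (fun x : Fin v => freq B x = i)).card
      ≤ (t - 1) * n.choose (lam + 1) := by
  classical
  obtain ⟨l, rfl⟩ : ∃ l : List (Finset (Fin v)), ↑l = B := ⟨B.toList, B.coe_toList⟩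
  subst hn
  simp only [Multiset.coe_card]
  set m := l.length with hm
  -- A x : set of block indices containing x
  set A : Fin v → Finset (Fin m) := fun x => Finset.univ.filter (fun i => x ∈ l.get i) with hA
  have hfreq : ∀ x, freq (↑l) x = (A x).card := fun x => countP_coe_eq_card l _
  -- Step: LHS = ∑ x, choose (freq x) (lam+1)
  have h0 : (0 : ℕ).choose (lam + 1) = 0 := Nat.choose_eq_zero_of_lt (by omega)
  have hIcc : Finset.Icc 1 m = (Finset.range (m+1)).erase 0 := by
    ext i; simp [Finset.mem_Icc, Nat.lt_succ_iff, Nat.one_le_iff_ne_zero, and_comm]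
  have hLHS : ∑ i ∈ Finset.Icc 1 m,
      i.choose (lam + 1) * (Finset.univ.filter (fun x : Fin v => freq (↑l) x = i)).card
      = ∑ x : Fin v, (freq (↑l) x).choose (lam + 1) := by
    rw [hIcc, Finset.sum_erase _ (by simp [h0])]
    have hmem : ∀ x : Fin v, freq (↑l : Multiset (Finset (Fin v))) x ∈ Finset.range (m+1) := by
      intro x
      refine Finset.mem_range.2 (Nat.lt_succ_of_le ?_)
      simpa [hm, freq] using Multiset.countP_le_card (fun b => x ∈ b) (↑l : Multiset (Finset (Fin v)))
    rw [← Finset.sum_fiberwise_of_maps_to (fun x _ => hmem x)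
      (fun x => (freq (↑l : Multiset (Finset (Fin v))) x).choose (lam+1))]
    refine Finset.sum_congr rfl fun i _ => ?_
    rw [Finset.sum_congr rfl (fun x hx => by rw [(Finset.mem_filter.1 hx).2])]
    simp [mul_comm]
  rw [hLHS]
  -- Step: rewrite choose via powersetCard
  have hpc : ∀ x : Fin v, (freq (↑l) x).choose (lam + 1)
      = ((Finset.univ.powersetCard (lam + 1) : Finset (Finset (Fin m))).filter
          (fun S => S ⊆ A x)).card := by
    intro x
    rw [hfreq, ← Finset.card_powersetCard]
    congr 1
    ext S
    simp only [Finset.mem_powersetCard, Finset.mem_filter]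
    constructor
    · exact fun ⟨h1, h2⟩ => ⟨⟨Finset.subset_univ _, h2⟩, h1⟩
    · exact fun ⟨⟨_, h2⟩, h1⟩ => ⟨h1, h2⟩
  simp only [hpc, Finset.card_filter]
  rw [Finset.sum_comm]
  -- per-S bound
  have hbound : ∀ S ∈ (Finset.univ.powersetCard (lam + 1) : Finset (Finset (Fin m))),
      (∑ x : Fin v, if S ⊆ A x then 1 else 0) ≤ t - 1 := by
    intro S hS
    rw [← Finset.card_filter]
    by_contra hc
    push_neg at hc
    have hcard : t ≤ (Finset.univ.filter (fun x : Fin v => S ⊆ A x)).card := by omega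
    obtain ⟨T, hTsub, hT⟩ := Finset.exists_subset_card_eq hcard
    have hle := hB.2 T hT
    have hge : lam + 1 ≤ Multiset.countP (fun b => T ⊆ b) ↑l := by
      rw [countP_coe_eq_card]
      have hScard : S.card = lam + 1 := (Finset.mem_powersetCard.1 hS).2
      rw [← hScard]
      apply Finset.card_le_card
      intro i hi
      simp only [Finset.mem_filter, Finset.mem_univ, true_and]
      intro y hy
      have := (Finset.mem_filter.1 (hTsub hy)).2 hi
      simpa [hA] using this
    omega
  calc ∑ S ∈ Finset.univ.powersetCard (lam + 1), ∑ x : Fin v, (if S ⊆ A x then 1 else 0)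
      ≤ ∑ S ∈ (Finset.univ.powersetCard (lam + 1) : Finset (Finset (Fin m))), (t - 1) :=
        Finset.sum_le_sum hbound
    _ = (t - 1) * m.choose (lam + 1) := by
        rw [Finset.sum_const, Finset.card_powersetCard, Finset.card_univ, Fintype.card_fin,
          smul_eq_mul, mul_comm]
end

section
/- In a packing design PD_λ(v,k,t) with n blocks, at most t-1 points have frequency strictly greater than ((t-1)·n + λ)/t. -/
open scoped Classical

lemma countP_or_le {α : Type*} (p q : α → Prop) [DecidablePred p] [DecidablePred q]
    [DecidablePred fun a => p a ∨ q a] (s : Multiset α) :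
    s.countP (fun a => p a ∨ q a) ≤ s.countP p + s.countP q := by
  induction s using Multiset.induction with
  | empty => simp
  | cons a s ih =>
    simp only [Multiset.countP_cons]
    by_cases hp : p a <;> by_cases hq : q a <;> simp [hp, hq] <;> omega

lemma countP_not_subset_le {v : ℕ} (B : Multiset (Finset (Fin v))) (T : Finset (Fin v)) :
    B.countP (fun b => ¬ T ⊆ b) ≤ ∑ x ∈ T, B.countP (fun b => x ∉ b) := by
  induction T using Finset.induction with
  | empty => simp
  | @insert a s ha ih =>
    rw [Finset.sum_insert ha]
    calc B.countP (fun b => ¬ insert a s ⊆ b)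
        = B.countP (fun b => a ∉ b ∨ ¬ s ⊆ b) := by
          apply Multiset.countP_congr rfl
          intro b _
          simp only [Finset.insert_subset_iff, eq_iff_iff]; tauto
      _ ≤ B.countP (fun b => a ∉ b) + B.countP (fun b => ¬ s ⊆ b) :=
          countP_or_le _ _ _
      _ ≤ B.countP (fun b => a ∉ b) + ∑ x ∈ s, B.countP (fun b => x ∉ b) :=
          Nat.add_le_add_left ih _

theorem stmt3 (v k t lam n : ℕ) (ht : 1 ≤ t) (htk : t ≤ k) (hkv : k ≤ v) (hlam : 1 ≤ lam)
    (B : Multiset (Finset (Fin v))) (hB : IsPD v k t lam B) (hn : Multiset.card B = n) :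
    (Finset.univ.filter (fun x : Fin v => (t - 1) * n + lam < t * freq B x)).card ≤ t - 1 := by
  by_contra hcon
  push_neg at hcon
  set S := Finset.univ.filter (fun x : Fin v => (t - 1) * n + lam < t * freq B x) with hS
  have hts : t ≤ S.card := by omega
  obtain ⟨T, hTS, hTcard⟩ := Finset.exists_subset_card_eq hts
  have hpack : B.countP (fun b => T ⊆ b) ≤ lam := hB.2 T hTcard
  set g : Fin v → ℕ := fun x => B.countP (fun b => x ∉ b) with hg
  have hfg : ∀ x : Fin v, freq B x + g x = n := by
    intro x
    show B.countP (fun b => x ∈ b) + B.countP (fun b => x ∉ b) = n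
    rw [ Multiset.countP_eq_card_filter, Multiset.countP_eq_card_filter,
      ← Multiset.card_add, Multiset.filter_add_not, hn]
  have hsplit : B.countP (fun b => T ⊆ b) + B.countP (fun b => ¬ T ⊆ b) = n := by
    rw [Multiset.countP_eq_card_filter, Multiset.countP_eq_card_filter, ← Multiset.card_add,
      Multiset.filter_add_not, hn]
  -- key pointwise bound
  have key : ∀ x ∈ T, t * g x + lam + 1 ≤ n := by
    intro x hxT
    have hx : (t - 1) * n + lam < t * freq B x := by
      have := hTS hxT
      rw [hS, Finset.mem_filter] at this
      exact this.2
    have h1 : t * freq B x + t * g x = t * n := by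
      rw [← Nat.mul_add, hfg x]
    have h2 : (t - 1) * n + n = t * n := by
      cases t with
      | zero => omega
      | succ m => simp [Nat.succ_mul]
    omega
  have hTne : T.Nonempty := by
    rw [← Finset.card_pos, hTcard]; omega
  have hlamn : lam + 1 ≤ n := by
    obtain ⟨x, hx⟩ := hTne
    have := key x hx
    omega
  have hsumle : t * ∑ x ∈ T, g x ≤ t * (n - (lam + 1)) := by
    rw [Finset.mul_sum]
    calc ∑ x ∈ T, t * g x ≤ ∑ x ∈ T, (n - (lam + 1)) := by
          apply Finset.sum_le_sum
          intro x hxT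
          have := key x hxT
          omega
      _ = t * (n - (lam + 1)) := by
          rw [Finset.sum_const, hTcard, smul_eq_mul]
  have hsum : ∑ x ∈ T, g x ≤ n - (lam + 1) :=
    Nat.le_of_mul_le_mul_left hsumle (by omega)
  have hbound := countP_not_subset_le B T
  -- combine
  have : lam + 1 ≤ B.countP (fun b => T ⊆ b) := by
    have : B.countP (fun b => ¬ T ⊆ b) ≤ n - (lam + 1) := le_trans hbound hsum
    omega
  omega
end

section
/- Let v ≥ k ≥ t ≥ 2 and λ ≥ 1 be integers. If a packing design PD_λ(v,k,t) with exactly d blocks exists, then (t-1)·C(d, λ+1) ≥ v·C(q, λ+1) + r·C(q, λ), where q and r are the unique integers with d·k = q·v + r and 0 ≤ r < v. -/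
open scoped Classical

lemma lemA (q lam : ℕ) : ∀ m, q.choose (lam+1) + m * q.choose lam ≤ (q+m).choose (lam+1) := by
  intro m
  induction m with
  | zero => simp
  | succ n ih =>
    have h1 : q.choose lam ≤ (q+n).choose lam := Nat.choose_le_choose _ (by omega)
    have h2 : (q+(n+1)).choose (lam+1) = (q+n).choose lam + (q+n).choose (lam+1) := by
      rw [show q+(n+1) = (q+n)+1 from rfl, Nat.choose_succ_succ]
    have h3 : (n+1) * q.choose lam = n * q.choose lam + q.choose lam := by ring
    omega

lemma lemB (lam : ℕ) : ∀ q n : ℕ, n ≤ q → q.choose (lam+1) ≤ n.choose (lam+1) + (q-n) * q.choose lam := by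
  intro q
  induction q with
  | zero => intro n hn; interval_cases n; simp
  | succ p ih =>
    intro n hn
    rcases Nat.eq_or_lt_of_le hn with h | h
    · subst h; simp
    · have hn' : n ≤ p := by omega
      have ihn := ih n hn'
      have h2 : (p+1).choose (lam+1) = p.choose lam + p.choose (lam+1) := Nat.choose_succ_succ _ _
      have h1 : p.choose lam ≤ (p+1).choose lam := Nat.choose_le_choose _ (by omega)
      have h3 : (p-n) * p.choose lam + p.choose lam = (p-n+1) * p.choose lam := by ring
      have h4 : (p-n+1) * p.choose lam ≤ (p+1-n) * (p+1).choose lam := by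
        apply Nat.mul_le_mul _ h1; omega
      omega

lemma lemZ (n q lam : ℕ) : (q.choose (lam+1) : ℤ) + (n - q) * q.choose lam ≤ n.choose (lam+1) := by
  rcases le_or_gt q n with h | h
  · obtain ⟨m, rfl⟩ := Nat.exists_eq_add_of_le h
    have := lemA q lam m
    push_cast
    nlinarith [this]
  · have := lemB lam q n (le_of_lt h)
    have hc : ((q - n : ℕ) : ℤ) = (q:ℤ) - n := by
      rw [Nat.cast_sub (le_of_lt h)]
    nlinarith [this, hc]

lemma aux_main (v t lam n : ℕ) (ht : 2 ≤ t)
    (F : Fin n → Finset (Fin v))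
    (hpack : ∀ T : Finset (Fin v), T.card = t →
      (Finset.univ.filter (fun i => T ⊆ F i)).card ≤ lam) :
    ∑ x : Fin v, ((Finset.univ.filter (fun i => x ∈ F i)).card).choose (lam+1)
      ≤ (t-1) * n.choose (lam+1) := by
  classical
  set P := (Finset.univ : Finset (Fin n)).powersetCard (lam+1) with hP
  have step1 : ∀ x : Fin v,
      ((Finset.univ.filter (fun i => x ∈ F i)).card).choose (lam+1)
        = (P.filter (fun s => s ⊆ Finset.univ.filter (fun i => x ∈ F i))).card := by
    intro x
    rw [← Finset.card_powersetCard]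
    congr 1
    ext s
    simp only [Finset.mem_powersetCard, Finset.mem_filter, hP]
    constructor
    · rintro ⟨h1, h2⟩; exact ⟨⟨s.subset_univ, h2⟩, h1⟩
    · rintro ⟨⟨_, h2⟩, h1⟩; exact ⟨h1, h2⟩
  calc ∑ x : Fin v, ((Finset.univ.filter (fun i => x ∈ F i)).card).choose (lam+1)
      = ∑ x : Fin v, (P.filter (fun s => s ⊆ Finset.univ.filter (fun i => x ∈ F i))).card := by
        exact Finset.sum_congr rfl (fun x _ => step1 x)
    _ = ∑ x : Fin v, ∑ s ∈ P, if s ⊆ Finset.univ.filter (fun i => x ∈ F i) then 1 else 0 := by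
        refine Finset.sum_congr rfl (fun x _ => ?_)
        rw [Finset.card_filter]
    _ = ∑ s ∈ P, ∑ x : Fin v, if s ⊆ Finset.univ.filter (fun i => x ∈ F i) then 1 else 0 :=
        Finset.sum_comm
    _ = ∑ s ∈ P, (Finset.univ.filter
          (fun x : Fin v => s ⊆ Finset.univ.filter (fun i => x ∈ F i))).card := by
        refine Finset.sum_congr rfl (fun s _ => ?_)
        rw [Finset.card_filter]
    _ ≤ ∑ _s ∈ P, (t-1) := by
        refine Finset.sum_le_sum (fun s hs => ?_)
        by_contra hcon
        push_neg at hcon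
        have ht' : t ≤ (Finset.univ.filter
            (fun x : Fin v => s ⊆ Finset.univ.filter (fun i => x ∈ F i))).card := by omega
        obtain ⟨T, hT, hTcard⟩ := Finset.exists_subset_card_eq ht'
        have hsub : s ⊆ Finset.univ.filter (fun i => T ⊆ F i) := by
          intro i hi
          simp only [Finset.mem_filter, Finset.mem_univ, true_and]
          intro x hx
          have := hT hx
          simp only [Finset.mem_filter, Finset.mem_univ, true_and] at this
          have := this hi
          simpa using this
        have hcard_s : s.card = lam + 1 := (Finset.mem_powersetCard.mp hs).2
        have := Finset.card_le_card hsub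
        have := hpack T hTcard
        omega
    _ = (t-1) * n.choose (lam+1) := by
        rw [Finset.sum_const, smul_eq_mul, hP, Finset.card_powersetCard]
        simp [mul_comm]

theorem stmt6 (v k t lam d q r : ℕ) (ht : 2 ≤ t) (htk : t ≤ k) (hkv : k ≤ v) (hlam : 1 ≤ lam)
    (hq : d * k = q * v + r) (hr : r < v)
    (B : Multiset (Finset (Fin v))) (hB : IsPD v k t lam B) (hd : Multiset.card B = d) :
    v * q.choose (lam + 1) + r * q.choose lam ≤ (t - 1) * d.choose (lam + 1) := by
  classical
  obtain ⟨hbcard, hpack⟩ := hB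
  obtain ⟨L, rfl⟩ : ∃ L : List (Finset (Fin v)), (↑L : Multiset _) = B := ⟨B.toList, B.coe_toList⟩
  have hlen : L.length = d := by simpa using hd
  subst hlen
  set F : Fin L.length → Finset (Fin v) := L.get with hF
  have hBmap : (↑L : Multiset (Finset (Fin v))) = Multiset.map F Finset.univ.val := by
    rw [hF, Fin.univ_val_map, List.ofFn_get]
  have hcnt : ∀ (p : Finset (Fin v) → Prop) (hp : DecidablePred p),
      Multiset.countP p ↑L = (Finset.univ.filter (fun i => p (F i))).card := by
    intro p hp
    rw [hBmap, Multiset.countP_map, Finset.card_def, Finset.filter_val]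
  -- pack in index form
  have hpackF : ∀ T : Finset (Fin v), T.card = t →
      (Finset.univ.filter (fun i => T ⊆ F i)).card ≤ lam := by
    intro T hT
    have h := hpack T hT
    rw [hcnt (fun b => T ⊆ b) (fun _ => inferInstance)] at h
    simpa only [Finset.filter_congr_decidable] using h
  -- sum of frequencies
  have hsum : ∑ x : Fin v, (Finset.univ.filter (fun i => x ∈ F i)).card = L.length * k := by
    calc ∑ x : Fin v, (Finset.univ.filter (fun i => x ∈ F i)).card
        = ∑ x : Fin v, ∑ i : Fin L.length, if x ∈ F i then 1 else 0 := by
          refine Finset.sum_congr rfl (fun x _ => ?_); rw [Finset.card_filter]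
      _ = ∑ i : Fin L.length, ∑ x : Fin v, if x ∈ F i then 1 else 0 := Finset.sum_comm
      _ = ∑ i : Fin L.length, (F i).card := by
          refine Finset.sum_congr rfl (fun i _ => ?_)
          rw [← Finset.card_filter]
          congr 1
          ext x; simp
      _ = ∑ _i : Fin L.length, k := by
          refine Finset.sum_congr rfl (fun i _ => ?_)
          exact hbcard (F i) (by
            rw [hF]
            exact Multiset.mem_coe.mpr (List.get_mem L i))
      _ = L.length * k := by simp [Finset.sum_const, Finset.card_univ]
  -- convexity lower bound, in ℤ
  have hconv : ((v * q.choose (lam+1) + r * q.choose lam : ℕ) : ℤ)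
      ≤ ∑ x : Fin v, (((Finset.univ.filter (fun i => x ∈ F i)).card).choose (lam+1) : ℤ) := by
    push_cast
    have hstep : ∀ x : Fin v,
        (q.choose (lam+1) : ℤ)
          + (((Finset.univ.filter (fun i => x ∈ F i)).card : ℤ) - q) * q.choose lam
          ≤ (((Finset.univ.filter (fun i => x ∈ F i)).card).choose (lam+1) : ℤ) :=
      fun x => lemZ _ q lam
    have hsumZ : ∑ x : Fin v, ((Finset.univ.filter (fun i => x ∈ F i)).card : ℤ)
        = (q : ℤ) * v + r := by
      have h1 := congrArg (Nat.cast (R := ℤ)) hsum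
      have h2 := congrArg (Nat.cast (R := ℤ)) hq
      push_cast at h1 h2
      linarith [h1, h2]
    calc ((v : ℤ) * q.choose (lam+1) + r * q.choose lam : ℤ)
        = ∑ x : Fin v, ((q.choose (lam+1) : ℤ)
            + (((Finset.univ.filter (fun i => x ∈ F i)).card : ℤ) - q) * q.choose lam) := by
          rw [Finset.sum_add_distrib, Finset.sum_const, Finset.card_univ, Fintype.card_fin,
            ← Finset.sum_mul, Finset.sum_sub_distrib, Finset.sum_const, Finset.card_univ,
            Fintype.card_fin, hsumZ, nsmul_eq_mul, nsmul_eq_mul]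
          ring
      _ ≤ _ := Finset.sum_le_sum (fun x _ => hstep x)
  -- upper bound
  have hupper := aux_main v t lam L.length ht F hpackF
  have hupperZ : (∑ x : Fin v, (((Finset.univ.filter (fun i => x ∈ F i)).card).choose (lam+1) : ℤ))
      ≤ (((t-1) * (L.length).choose (lam+1) : ℕ) : ℤ) := by
    exact_mod_cast hupper
  have := le_trans hconv hupperZ
  exact_mod_cast this
end

section
/- For any integers v ≥ k ≥ t ≥ 1 and n ≥ 0, there exists a packing design PD_{⌈nk/v⌉}(v,k,t) with exactly n blocks in which every point has frequency either ⌊nk/v⌋ or ⌈nk/v⌉. -/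
open scoped Classical

private lemma count_mod_card (v : ℕ) (hv : 0 < v) (x N : ℕ) (hxv : x < v) :
    ((Finset.range N).filter (fun m => m % v = x)).card
      = N / v + (if x < N % v then 1 else 0) := by
  induction N with
  | zero => simp
  | succ N ih =>
    rw [Finset.range_add_one, Finset.filter_insert]
    have hmod : N % v < v := Nat.mod_lt _ hv
    have hdm := Nat.div_add_mod N v
    set P := v * (N / v) with hP
    by_cases hlt : N % v + 1 < v
    · have hv1 : 1 < v := by omega
      have h1 : (N + 1) % v = N % v + 1 := by
        rw [Nat.add_mod, Nat.mod_eq_of_lt hv1, Nat.mod_eq_of_lt (by omega : N % v + 1 < v)]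
      have h2 : (N + 1) / v = N / v := by
        rw [Nat.succ_div, if_neg, add_zero]
        rw [Nat.dvd_iff_mod_eq_zero, h1]; omega
      by_cases hx : N % v = x
      · rw [if_pos hx, Finset.card_insert_of_notMem (by simp), ih, h1, h2,
          if_neg (by omega : ¬ x < N % v), if_pos (by omega : x < N % v + 1)]
      · rw [if_neg hx, ih, h1, h2]
        by_cases hx2 : x < N % v
        · rw [if_pos hx2, if_pos (by omega)]
        · rw [if_neg hx2, if_neg (by omega)]
    · have hNv : N % v = v - 1 := by omega
      have hsum : N + 1 = v * (N / v + 1) := by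
        have : v * (N / v + 1) = P + v := by rw [hP]; ring
        omega
      have h1 : (N + 1) % v = 0 := by rw [hsum, Nat.mul_mod_right]
      have h2 : (N + 1) / v = N / v + 1 := by
        rw [hsum, Nat.mul_div_cancel_left _ hv]
      by_cases hx : N % v = x
      · rw [if_pos hx, Finset.card_insert_of_notMem (by simp), ih, h1, h2,
          if_neg (by omega : ¬ x < N % v), if_neg (by omega : ¬ x < 0)]
      · rw [if_neg hx, ih, h1, h2, if_neg (by omega : ¬ x < 0),
          if_pos (by omega : x < N % v)]

private lemma ceil_div_cases (v N : ℕ) (hv : 0 < v) :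
    N ⌈/⌉ v = N / v + (if N % v = 0 then 0 else 1) := by
  rw [Nat.ceilDiv_eq_add_pred_div]
  have hdm := Nat.div_add_mod N v
  have hmod : N % v < v := Nat.mod_lt _ hv
  set P := v * (N / v) with hP
  by_cases hr : N % v = 0
  · rw [if_pos hr]
    have e : N + v - 1 = v * (N / v) + (v - 1) := by omega
    rw [e, Nat.mul_add_div hv,
      Nat.div_eq_of_lt (show v - 1 < v by omega), add_zero]
  · rw [if_neg hr]
    have e : N + v - 1 = v * (N / v + 1) + (N % v - 1) := by
      have : v * (N / v + 1) = P + v := by rw [hP]; ring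
      omega
    rw [e, Nat.mul_add_div hv,
      Nat.div_eq_of_lt (show N % v - 1 < v by omega), add_zero]

theorem stmt7 (v k t n : ℕ) (ht : 1 ≤ t) (htk : t ≤ k) (hkv : k ≤ v) :
    ∃ B : Multiset (Finset (Fin v)),
      IsPD v k t ((n * k) ⌈/⌉ v) B ∧ Multiset.card B = n ∧
      ∀ x : Fin v, freq B x = n * k / v ∨ freq B x = (n * k) ⌈/⌉ v := by
  have hk : 0 < k := le_trans ht htk
  have hv : 0 < v := lt_of_lt_of_le hk hkv
  set N := n * k with hN
  set f : ℕ → Finset (Fin v) :=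
    fun i => (Finset.range k).image fun j => (⟨(i * k + j) % v, Nat.mod_lt _ hv⟩ : Fin v)
    with hf
  set B : Multiset (Finset (Fin v)) := (Multiset.range n).map f with hB
  have hmem : ∀ (i : ℕ) (x : Fin v), x ∈ f i ↔ ∃ j < k, (i * k + j) % v = x.val := by
    intro i x
    simp only [hf, Finset.mem_image, Finset.mem_range, Fin.ext_iff]
  have hcardblk : ∀ i, (f i).card = k := by
    intro i
    rw [hf]
    rw [Finset.card_image_of_injOn, Finset.card_range]
    intro j1 h1 j2 h2 he
    simp only [Finset.coe_range, Set.mem_Iio] at h1 h2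
    have he' : j1 % v = j2 % v :=
      Nat.ModEq.add_left_cancel' (i * k) (by simpa [Fin.ext_iff, Nat.ModEq] using he)
    rwa [Nat.mod_eq_of_lt (by omega), Nat.mod_eq_of_lt (by omega)] at he'
  have hfreq1 : ∀ x : Fin v,
      freq B x = ((Finset.range n).filter (fun i => x ∈ f i)).card := by
    intro x
    rw [freq, hB, Multiset.countP_map]
    rfl
  have hbij : ∀ x : Fin v,
      ((Finset.range n).filter (fun i => x ∈ f i)).card
        = ((Finset.range N).filter (fun m => m % v = x.val)).card := by
    intro x
    refine (Finset.card_bij (fun m _ => m / k) ?_ ?_ ?_).symm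
    · intro m hm
      rw [Finset.mem_filter, Finset.mem_range] at hm
      rw [Finset.mem_filter, Finset.mem_range]
      refine ⟨(Nat.div_lt_iff_lt_mul hk).2 hm.1, ?_⟩
      rw [hmem]
      exact ⟨m % k, Nat.mod_lt _ hk, by rw [Nat.div_add_mod' m k]; exact hm.2⟩
    · intro a1 ha1 a2 ha2 he
      rw [Finset.mem_filter, Finset.mem_range] at ha1 ha2
      have e1 := Nat.div_add_mod a1 k
      have e2 := Nat.div_add_mod a2 k
      have hr1 : a1 % k < k := Nat.mod_lt _ hk
      have hr2 : a2 % k < k := Nat.mod_lt _ hk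
      have hmm : (k * (a1 / k) + a1 % k) % v = (k * (a1 / k) + a2 % k) % v := by
        rw [e1, he, e2, ha1.2, ha2.2]
      have he' : a1 % k % v = a2 % k % v := Nat.ModEq.add_left_cancel' _ hmm
      rw [Nat.mod_eq_of_lt (show a1 % k < v by omega),
        Nat.mod_eq_of_lt (show a2 % k < v by omega)] at he'
      have hke : k * (a1 / k) = k * (a2 / k) := by rw [he]
      omega
    · intro b hb
      rw [Finset.mem_filter, Finset.mem_range, hmem] at hb
      obtain ⟨hbn, j, hj, hjx⟩ := hb
      refine ⟨b * k + j, ?_, ?_⟩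
      · rw [Finset.mem_filter, Finset.mem_range]
        refine ⟨?_, hjx⟩
        calc b * k + j < (b + 1) * k := by rw [add_mul, one_mul]; omega
          _ ≤ n * k := Nat.mul_le_mul_right k (by omega)
      · show (b * k + j) / k = b
        rw [Nat.mul_comm, Nat.mul_add_div hk, Nat.div_eq_of_lt hj, add_zero]
  have hfreq : ∀ x : Fin v,
      freq B x = N / v + (if x.val < N % v then 1 else 0) := by
    intro x
    rw [hfreq1, hbij, count_mod_card v hv _ _ x.isLt]
  have hceil := ceil_div_cases v N hv
  refine ⟨B, ⟨?_, ?_⟩, by simp [hB], ?_⟩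
  · intro b hb
    rw [hB, Multiset.mem_map] at hb
    obtain ⟨i, _, rfl⟩ := hb
    exact hcardblk i
  · intro T hT
    obtain ⟨y, hy⟩ : ∃ y, y ∈ T := by
      have : 0 < T.card := by omega
      exact Finset.card_pos.mp this
    have h1 : B.countP (fun b => T ⊆ b) ≤ B.countP (fun b => y ∈ b) := by
      rw [Multiset.countP_eq_card_filter, Multiset.countP_eq_card_filter]
      exact Multiset.card_le_card
        (Multiset.monotone_filter_right B (fun b hb => hb hy))
    refine le_trans h1 ?_
    have hfy := hfreq y
    rw [freq] at hfy
    rw [hfy, hceil]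
    split_ifs <;> omega
  · intro x
    rw [hfreq x, hceil]
    by_cases hx : x.val < N % v
    · right
      rw [if_pos hx, if_neg (by omega)]
    · left
      rw [if_neg hx, add_zero]
end

section
/- Let v ≥ k ≥ t ≥ 2, λ ≥ 1 and n ≥ 1 be integers. If k ≥ (t-1)·C(n-1, λ) and λ·v ≥ n·k - (t-1)·C(n, λ+1), then there exists a packing design PD_λ(v,k,t) with exactly n blocks in which every point has frequency at most λ+1. -/
open scoped Classical

lemma countA (c m : ℕ) (hc : 0 < c) (P : ℕ → Prop) [DecidablePred P] :
    ((Finset.range (c * m)).filter (fun x => P (x / c))).card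
      = c * ((Finset.range m).filter P).card := by
  induction m with
  | zero => simp
  | succ m ih =>
    have hsplit : Finset.range (c * (m + 1))
        = Finset.range (c * m) ∪ Finset.Ico (c * m) (c * m + c) := by
      ext x
      simp only [Finset.mem_union, Finset.mem_range, Finset.mem_Ico, Nat.mul_succ]
      omega
    have hdisj : Disjoint (Finset.range (c * m)) (Finset.Ico (c * m) (c * m + c)) := by
      simp only [Finset.disjoint_left, Finset.mem_Ico, Finset.mem_range]
      intro a ha h
      omega
    have hIco : ∀ x ∈ Finset.Ico (c * m) (c * m + c), x / c = m := by
      intro x hx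
      rw [Finset.mem_Ico] at hx
      exact Nat.div_eq_of_lt_le (by rw [Nat.mul_comm]; exact hx.1)
        (by rw [Nat.succ_mul, Nat.mul_comm]; omega)
    have h2 : ((Finset.Ico (c * m) (c * m + c)).filter (fun x => P (x / c))).card
        = if P m then c else 0 := by
      by_cases hP : P m
      · rw [Finset.filter_true_of_mem (fun x hx => by rw [hIco x hx]; exact hP)]
        simp [hP]
      · rw [Finset.filter_false_of_mem (fun x hx => by rw [hIco x hx]; exact hP)]
        simp [hP]
    rw [hsplit, Finset.filter_union, Finset.card_union_of_disjoint
      (Finset.disjoint_filter_filter hdisj), ih, h2, Finset.range_add_one,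
      Finset.filter_insert]
    by_cases hP : P m
    · rw [if_pos hP, if_pos hP,
        Finset.card_insert_of_notMem (by simp), Nat.mul_add, Nat.mul_one]
    · rw [if_neg hP, if_neg hP, Nat.add_zero]

lemma countB {α : Type*} [DecidableEq α] (L : List α) (hL : L.Nodup) (d : α)
    (Q : α → Prop) [DecidablePred Q] :
    ((Finset.range L.length).filter (fun j => Q (L.getD j d))).card
      = (L.toFinset.filter Q).card := by
  apply Finset.card_bij (fun j _ => L.getD j d)
  · intro j hj
    simp only [Finset.mem_filter, Finset.mem_range] at hj
    obtain ⟨hj1, hj2⟩ := hj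
    rw [List.getD_eq_getElem L d hj1] at hj2 ⊢
    simp only [Finset.mem_filter, List.mem_toFinset]
    exact ⟨List.getElem_mem _, hj2⟩
  · intro a ha b hb hab
    simp only [Finset.mem_filter, Finset.mem_range] at ha hb
    rw [List.getD_eq_getElem L d ha.1, List.getD_eq_getElem L d hb.1] at hab
    exact hL.getElem_inj_iff.1 hab
  · intro a ha
    simp only [Finset.mem_filter, List.mem_toFinset] at ha
    obtain ⟨j, hj, hja⟩ := List.mem_iff_getElem.1 ha.1
    refine ⟨j, ?_, ?_⟩
    · simp only [Finset.mem_filter, Finset.mem_range]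
      rw [List.getD_eq_getElem L d hj, hja]
      exact ⟨hj, ha.2⟩
    · rw [List.getD_eq_getElem L d hj, hja]

lemma countC (n lam i : ℕ) (hi : i < n) :
    (((Finset.range n).powersetCard (lam + 1)).filter (fun S => i ∈ S)).card
      = (n - 1).choose lam := by
  have key : (((Finset.range n).powersetCard (lam + 1)).filter (fun S => i ∈ S)).card
      = (((Finset.range n).erase i).powersetCard lam).card := by
    refine Finset.card_bij' (fun S _ => S.erase i) (fun S _ => insert i S) ?_ ?_ ?_ ?_
    · intro S hS
      simp only [Finset.mem_filter, Finset.mem_powersetCard] at hS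
      rw [Finset.mem_powersetCard]
      constructor
      · intro x hx
        rw [Finset.mem_erase] at hx ⊢
        exact ⟨hx.1, hS.1.1 hx.2⟩
      · rw [Finset.card_erase_of_mem hS.2, hS.1.2]
        omega
    · intro S hS
      rw [Finset.mem_powersetCard] at hS
      have hiS : i ∉ S := fun h => (Finset.mem_erase.1 (hS.1 h)).1 rfl
      rw [Finset.mem_filter, Finset.mem_powersetCard]
      refine ⟨⟨fun x hx => ?_, ?_⟩, Finset.mem_insert_self _ _⟩
      · rcases Finset.mem_insert.1 hx with h | hx
        · rw [h]; exact Finset.mem_range.2 hi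
        · exact Finset.mem_of_mem_erase (hS.1 hx)
      · rw [Finset.card_insert_of_notMem hiS, hS.2]
    · intro S hS
      rw [Finset.mem_filter] at hS
      exact Finset.insert_erase hS.2
    · intro S hS
      rw [Finset.mem_powersetCard] at hS
      have hiS : i ∉ S := fun h => (Finset.mem_erase.1 (hS.1 h)).1 rfl
      exact Finset.erase_insert hiS
  rw [key, Finset.card_powersetCard, Finset.card_erase_of_mem (Finset.mem_range.2 hi),
    Finset.card_range]

lemma countD (n d i : ℕ) (hi : i < n) :
    ((Finset.range (n * d)).filter (fun s => s % n = i)).card = d := by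
  have key : (Finset.range d).card
      = ((Finset.range (n * d)).filter (fun s => s % n = i)).card := by
    refine Finset.card_bij (fun j _ => j * n + i) ?_ ?_ ?_
    · intro j hj
      rw [Finset.mem_range] at hj
      simp only [Finset.mem_filter, Finset.mem_range]
      constructor
      · have : (j + 1) * n ≤ d * n := Nat.mul_le_mul_right n hj
        have h2 : d * n = n * d := Nat.mul_comm _ _
        have h3 : (j + 1) * n = j * n + n := by ring
        omega
      · rw [Nat.mul_comm j n, Nat.mul_add_mod]
        exact Nat.mod_eq_of_lt hi
    · intro a _ b _ hab
      have h1 : a * n = b * n := by omega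
      exact Nat.eq_of_mul_eq_mul_right (by omega) h1
    · intro s hs
      simp only [Finset.mem_filter, Finset.mem_range] at hs
      refine ⟨s / n, Finset.mem_range.2 (Nat.div_lt_of_lt_mul hs.1), ?_⟩
      have h1 := Nat.div_add_mod s n
      rw [Nat.mul_comm]
      omega
  rw [← key, Finset.card_range]

lemma countP_mapRange {β : Type*} (n : ℕ) (f : ℕ → β) (p : β → Prop) [DecidablePred p] :
    ((Multiset.range n).map f).countP p = ((Finset.range n).filter (fun i => p (f i))).card := by
  rw [Multiset.countP_map]; rfl

lemma finCard (v : ℕ) (P : ℕ → Prop) [DecidablePred P] (m : ℕ) (hm : m ≤ v)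
    (h : ∀ y, P y → y < m) :
    (Finset.univ.filter (fun x : Fin v => P x.val)).card = ((Finset.range m).filter P).card := by
  refine Finset.card_bij (fun x _ => x.val) ?_ ?_ ?_
  · intro x hx
    rw [Finset.mem_filter] at hx ⊢
    exact ⟨Finset.mem_range.2 (h _ hx.2), hx.2⟩
  · intro a _ b _ hab
    exact Fin.val_injective hab
  · intro y hy
    rw [Finset.mem_filter, Finset.mem_range] at hy
    exact ⟨⟨y, lt_of_lt_of_le hy.1 hm⟩, by rw [Finset.mem_filter]; exact ⟨Finset.mem_univ _, hy.2⟩, rfl⟩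

theorem stmt8 (v k t lam n : ℕ) (ht : 2 ≤ t) (htk : t ≤ k) (hkv : k ≤ v) (hlam : 1 ≤ lam)
    (hn : 1 ≤ n)
    (hk : (t - 1) * (n - 1).choose lam ≤ k)
    (hv : (n * k : ℤ) - (t - 1) * (n.choose (lam + 1)) ≤ lam * v) :
    ∃ B : Multiset (Finset (Fin v)),
      IsPD v k t lam B ∧ Multiset.card B = n ∧ ∀ x : Fin v, freq B x ≤ lam + 1 := by
  by_cases hcase : n ≤ lam
  · -- easy case: n ≤ lam, take n copies of {0,...,k-1}
    refine ⟨Multiset.replicate n (Finset.univ.filter (fun x : Fin v => x.val < k)),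
      ⟨?_, ?_⟩, ?_, ?_⟩
    · intro b hb
      rw [Multiset.eq_of_mem_replicate hb]
      rw [finCard v (fun y => y < k) k hkv (fun y hy => hy),
        Finset.filter_true_of_mem (fun y hy => Finset.mem_range.1 hy), Finset.card_range]
    · intro T _
      calc (Multiset.replicate n _).countP (fun b => T ⊆ b)
          ≤ Multiset.card (Multiset.replicate n _) := Multiset.countP_le_card _ _
        _ = n := Multiset.card_replicate _ _
        _ ≤ lam := hcase
    · simp
    · intro x
      calc freq _ x ≤ Multiset.card (Multiset.replicate n _) := Multiset.countP_le_card _ _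
        _ = n := Multiset.card_replicate _ _
        _ ≤ lam + 1 := by omega
  -- main case: lam + 1 ≤ n
  push_neg at hcase
  have htpos : 0 < t - 1 := by omega
  obtain ⟨N, hN⟩ : ∃ x, n.choose (lam + 1) = x := ⟨_, rfl⟩
  obtain ⟨Chm, hChm⟩ : ∃ x, (n - 1).choose lam = x := ⟨_, rfl⟩
  rw [hChm] at hk
  rw [hN] at hv
  obtain ⟨M, hM⟩ : ∃ x, (t - 1) * N = x := ⟨_, rfl⟩
  obtain ⟨d, hd⟩ : ∃ x, k - (t - 1) * Chm = x := ⟨_, rfl⟩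
  have hdk : k = (t - 1) * Chm + d := by omega
  have hid : n * Chm = (lam + 1) * N := by
    have h2 : n - 1 + 1 = n := by omega
    have h1 := Nat.add_one_mul_choose_eq (n - 1) lam
    rw [h2] at h1
    rw [← hChm, ← hN, h1]
    ring
  have hnk : n * k = n * d + (t - 1) * ((lam + 1) * N) := by
    calc n * k = n * d + (t - 1) * (n * Chm) := by rw [hdk]; ring
      _ = n * d + (t - 1) * ((lam + 1) * N) := by rw [hid]
  have hMz : (M : ℤ) = ((t : ℤ) - 1) * N := by
    rw [← hM]; push_cast [Nat.cast_sub (by omega : 1 ≤ t)]; ring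
  have hineqz : (n : ℤ) * d + lam * M ≤ lam * v := by
    have h2 := congrArg (Nat.cast : ℕ → ℤ) hnk
    push_cast [Nat.cast_sub (by omega : 1 ≤ t)] at h2
    have hring : ((t : ℤ) - 1) * (((lam : ℤ) + 1) * N)
        = (lam : ℤ) * (((t : ℤ) - 1) * N) + ((t : ℤ) - 1) * N := by ring
    rw [hMz]
    linarith [hv, h2, hring]
  have hineq : n * d + lam * M ≤ lam * v := by exact_mod_cast hineqz
  have hMv : M ≤ v := Nat.le_of_mul_le_mul_left (by omega) (by omega : 0 < lam)
  have hnd : n * d ≤ lam * (v - M) := by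
    have h : lam * (v - M) + lam * M = lam * v := by
      rw [← Nat.mul_add, Nat.sub_add_cancel hMv]
    omega
  -- the list of (lam+1)-subsets of range n
  set L : List (Finset ℕ) := ((Finset.range n).powersetCard (lam + 1)).toList with hL
  have hLlen : L.length = N := by
    rw [hL, Finset.length_toList, Finset.card_powersetCard, Finset.card_range, hN]
  have hLnd : L.Nodup := Finset.nodup_toList _
  have hLget : ∀ j, j < N → L.getD j ∅ ∈ (Finset.range n).powersetCard (lam + 1) := by
    intro j hj
    have hj' : j < L.length := by omega
    rw [List.getD_eq_getElem L ∅ hj']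
    rw [← Finset.mem_toList, ← hL]
    exact List.getElem_mem _
  -- the assignment of points to sets of blocks
  set g : ℕ → Finset ℕ := fun y =>
    if y < M then L.getD (y / (t - 1)) ∅
    else (Finset.Ico ((y - M) * lam) (min ((y - M) * lam + lam) (n * d))).image (· % n)
    with hg
  have hghigh : ∀ y, y < M → g y = L.getD (y / (t - 1)) ∅ := by
    intro y hy; rw [hg]; simp only [if_pos hy]
  have hglow : ∀ y, ¬ y < M →
      g y = (Finset.Ico ((y - M) * lam) (min ((y - M) * lam + lam) (n * d))).image (· % n) := by
    intro y hy; rw [hg]; simp only [if_neg hy]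
  have hgcard_high : ∀ y, y < M → (g y).card = lam + 1 := by
    intro y hy
    have hj : y / (t - 1) < N := Nat.div_lt_of_lt_mul (by rw [hM]; exact hy)
    rw [hghigh y hy]
    exact (Finset.mem_powersetCard.1 (hLget _ hj)).2
  have hgcard_low : ∀ y, ¬ y < M → (g y).card ≤ lam := by
    intro y hy
    rw [hglow y hy]
    calc ((Finset.Ico ((y - M) * lam) (min ((y - M) * lam + lam) (n * d))).image (· % n)).card
        ≤ (Finset.Ico ((y - M) * lam) (min ((y - M) * lam + lam) (n * d))).card :=
          Finset.card_image_le
      _ = min ((y - M) * lam + lam) (n * d) - (y - M) * lam := Nat.card_Ico _ _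
      _ ≤ lam := by omega
  have hgcard : ∀ y, (g y).card ≤ lam + 1 := by
    intro y
    by_cases hy : y < M
    · exact le_of_eq (hgcard_high y hy)
    · exact le_trans (hgcard_low y hy) (by omega)
  -- the blocks
  set blk : ℕ → Finset (Fin v) := fun i => Finset.univ.filter (fun x : Fin v => i ∈ g x.val)
    with hblk
  refine ⟨(Multiset.range n).map blk, ⟨?_, ?_⟩, ?_, ?_⟩
  · -- every block has k points
    intro b hb
    rw [Multiset.mem_map] at hb
    obtain ⟨i, hi, rfl⟩ := hb
    rw [Multiset.mem_range] at hi
    show (Finset.univ.filter (fun x : Fin v => i ∈ g x.val)).card = k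
    -- split the count of points in block i into high and low points
    have hsplit : (Finset.univ.filter (fun x : Fin v => i ∈ g x.val ∧ x.val < M)).card
        + (Finset.univ.filter (fun x : Fin v => i ∈ g x.val ∧ ¬ x.val < M)).card
        = (Finset.univ.filter (fun x : Fin v => i ∈ g x.val)).card := by
      rw [← Finset.filter_filter, ← Finset.filter_filter]
      exact Finset.card_filter_add_card_filter_not _
    -- high count
    have hhigh : (Finset.univ.filter (fun x : Fin v => i ∈ g x.val ∧ x.val < M)).card
        = (t - 1) * Chm := by
      rw [finCard v (fun y => i ∈ g y ∧ y < M) M hMv (fun y hy => hy.2)]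
      have hcongr : (Finset.range M).filter (fun y => i ∈ g y ∧ y < M)
          = (Finset.range M).filter (fun y => i ∈ L.getD (y / (t - 1)) ∅) := by
        apply Finset.filter_congr
        intro y hy
        rw [Finset.mem_range] at hy
        rw [hghigh y hy]
        constructor
        · exact fun h => h.1
        · exact fun h => ⟨h, hy⟩
      rw [hcongr, ← hM, countA (t - 1) N htpos (fun j => i ∈ L.getD j ∅), ← hLlen,
        countB L hLnd ∅ (fun S => i ∈ S), hL, Finset.toList_toFinset]
      rw [countC n lam i hi, hChm]
    -- low count
    have hlow : (Finset.univ.filter (fun x : Fin v => i ∈ g x.val ∧ ¬ x.val < M)).card = d := by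
      rw [← countD n d i hi]
      refine (Finset.card_bij
        (fun s hs => (⟨M + s / lam, ?_⟩ : Fin v)) ?_ ?_ ?_).symm
      · -- M + s / lam < v
        rw [Finset.mem_filter, Finset.mem_range] at hs
        have h1 : s < lam * (v - M) := lt_of_lt_of_le hs.1 hnd
        have h2 : s / lam < v - M := Nat.div_lt_of_lt_mul h1
        omega
      · -- membership in the target
        intro s hs
        rw [Finset.mem_filter, Finset.mem_range] at hs
        rw [Finset.mem_filter]
        refine ⟨Finset.mem_univ _, ?_, by simp⟩
        have hyM : ¬ (M + s / lam < M) := Nat.not_lt.2 (Nat.le_add_right M _)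
        rw [hglow _ hyM]
        rw [Finset.mem_image]
        refine ⟨s, ?_, hs.2⟩
        rw [Finset.mem_Ico]
        have hsub : M + s / lam - M = s / lam := Nat.add_sub_cancel_left M _
        rw [hsub]
        refine ⟨Nat.div_mul_le_self s lam, lt_min ?_ hs.1⟩
        have h1 := Nat.div_add_mod s lam
        have h2 : s % lam < lam := Nat.mod_lt _ (by omega)
        have h3 : s / lam * lam = lam * (s / lam) := Nat.mul_comm _ _
        omega
      · -- injectivity
        intro s1 hs1 s2 hs2 hab
        rw [Finset.mem_filter, Finset.mem_range] at hs1 hs2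
        have heq : s1 / lam = s2 / lam := by
          have h0 := congrArg Fin.val hab
          simp only [Fin.val_mk] at h0
          omega
        have hb1 := Nat.div_add_mod s1 lam
        have hb2 := Nat.div_add_mod s2 lam
        have hm1 : s1 % lam < lam := Nat.mod_lt _ (by omega)
        have hm2 : s2 % lam < lam := Nat.mod_lt _ (by omega)
        have hmul : lam * (s1 / lam) = lam * (s2 / lam) := by rw [heq]
        rcases lt_trichotomy s1 s2 with hlt | heq' | hlt
        · exfalso
          have hmod : s1 ≡ s2 [MOD n] := by
            unfold Nat.ModEq; rw [hs1.2, hs2.2]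
          have hdvd : n ∣ s2 - s1 := (Nat.modEq_iff_dvd' (le_of_lt hlt)).1 hmod
          have hle : n ≤ s2 - s1 := Nat.le_of_dvd (by omega) hdvd
          omega
        · exact heq'
        · exfalso
          have hmod : s2 ≡ s1 [MOD n] := by
            unfold Nat.ModEq; rw [hs1.2, hs2.2]
          have hdvd : n ∣ s1 - s2 := (Nat.modEq_iff_dvd' (le_of_lt hlt)).1 hmod
          have hle : n ≤ s1 - s2 := Nat.le_of_dvd (by omega) hdvd
          omega
      · -- surjectivity
        intro x hx
        rw [Finset.mem_filter] at hx
        obtain ⟨-, hxg, hxM⟩ := hx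
        rw [hglow _ hxM, Finset.mem_image] at hxg
        obtain ⟨s, hsIco, hsmod⟩ := hxg
        rw [Finset.mem_Ico] at hsIco
        have hsnd : s < n * d := lt_of_lt_of_le hsIco.2 (min_le_right _ _)
        refine ⟨s, ?_, ?_⟩
        · rw [Finset.mem_filter, Finset.mem_range]
          exact ⟨hsnd, hsmod⟩
        · have hdiv : s / lam = x.val - M := by
            apply Nat.div_eq_of_lt_le
            · exact hsIco.1
            · have h1 := lt_of_lt_of_le hsIco.2 (min_le_left _ _)
              calc s < (x.val - M) * lam + lam := h1
                _ = ((x.val - M) + 1) * lam := by ring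
          apply Fin.ext
          simp only [Fin.val_mk]
          rw [hdiv]
          omega
    omega
  · -- packing condition
    intro T hT
    rw [countP_mapRange]
    by_contra hcon
    push_neg at hcon
    have hcon' : lam + 1 ≤ ((Finset.range n).filter (fun i => T ⊆ blk i)).card := hcon
    obtain ⟨S, hSsub, hScard⟩ := Finset.exists_subset_card_eq hcon'
    have hTne : T.Nonempty := Finset.card_pos.1 (by rw [hT]; omega)
    have hSg : ∀ x ∈ T, S ⊆ g x.val := by
      intro x hx i hiS
      have hiF := hSsub hiS
      rw [Finset.mem_filter] at hiF
      have h2 : x ∈ Finset.univ.filter (fun y : Fin v => i ∈ g y.val) := hiF.2 hx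
      exact (Finset.mem_filter.1 h2).2
    have hhigh : ∀ x ∈ T, x.val < M ∧ g x.val = S := by
      intro x hx
      by_cases hxM : x.val < M
      · refine ⟨hxM, ?_⟩
        have h1 : S ⊆ g x.val := hSg x hx
        have h2 : (g x.val).card ≤ lam + 1 := hgcard _
        exact (Finset.eq_of_subset_of_card_le h1 (by rw [hScard]; exact h2)).symm
      · exfalso
        have h1 : lam + 1 ≤ (g x.val).card := hScard ▸ Finset.card_le_card (hSg x hx)
        have h2 := hgcard_low _ hxM
        omega
    obtain ⟨x0, hx0⟩ := hTne
    have hj0 := hhigh x0 hx0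
    have hdiveq : ∀ x ∈ T, x.val / (t - 1) = x0.val / (t - 1) := by
      intro x hx
      obtain ⟨hxM, hxS⟩ := hhigh x hx
      obtain ⟨hx0M, hx0S⟩ := hj0
      have e1 : L.getD (x.val / (t - 1)) ∅ = L.getD (x0.val / (t - 1)) ∅ := by
        rw [← hghigh x.val hxM, ← hghigh x0.val hx0M, hxS, hx0S]
      have hlt1 : x.val / (t - 1) < L.length := by
        rw [hLlen]; exact Nat.div_lt_of_lt_mul (by rw [hM]; exact hxM)
      have hlt2 : x0.val / (t - 1) < L.length := by
        rw [hLlen]; exact Nat.div_lt_of_lt_mul (by rw [hM]; exact hx0M)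
      rw [List.getD_eq_getElem L ∅ hlt1, List.getD_eq_getElem L ∅ hlt2] at e1
      exact hLnd.getElem_inj_iff.1 e1
    have hmem : ∀ x ∈ T,
        x.val ∈ Finset.Ico (x0.val / (t - 1) * (t - 1)) (x0.val / (t - 1) * (t - 1) + (t - 1)) := by
      intro x hx
      have h1 := Nat.div_add_mod x.val (t - 1)
      have h2 : x.val % (t - 1) < t - 1 := Nat.mod_lt _ htpos
      have h3 := hdiveq x hx
      rw [Finset.mem_Ico]
      have h4 : (t - 1) * (x.val / (t - 1)) = (t - 1) * (x0.val / (t - 1)) := by rw [h3]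
      have h5 : x0.val / (t - 1) * (t - 1) = (t - 1) * (x0.val / (t - 1)) := Nat.mul_comm _ _
      omega
    have hfin : T.card ≤ (Finset.Ico (x0.val / (t - 1) * (t - 1))
        (x0.val / (t - 1) * (t - 1) + (t - 1))).card :=
      Finset.card_le_card_of_injOn (fun x : Fin v => x.val) hmem
        (fun a _ b _ hab => Fin.val_injective hab)
    rw [hT, Nat.card_Ico] at hfin
    omega
  · simp
  · -- frequency bound
    intro x
    unfold freq
    rw [countP_mapRange]
    calc ((Finset.range n).filter (fun i => x ∈ blk i)).card
        ≤ (g x.val).card := by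
          apply Finset.card_le_card
          intro i hi
          rw [Finset.mem_filter] at hi
          have h2 : x ∈ Finset.univ.filter (fun y : Fin v => i ∈ g y.val) := hi.2
          exact (Finset.mem_filter.1 h2).2
      _ ≤ lam + 1 := hgcard _
end

section
/- Let v ≥ k ≥ t ≥ 2, λ ≥ 1 and n ≥ 1 be integers satisfying n·k - (t-1)·C(n, λ+1) ≤ λ·v < (n+1)·k - (t-1)·C(n+1, λ+1). Then the packing number PDN_λ(v,k,t) equals n; that is, a PD_λ(v,k,t) with n blocks exists but no PD_λ(v,k,t) with n+1 blocks exists. -/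
open scoped Classical

/-- The packing number PDN_λ(v,k,t): the maximum number of blocks of a PD_λ(v,k,t). -/
noncomputable def PDN (v k t lam : ℕ) : ℕ :=
  sSup {n | ∃ B : Multiset (Finset (Fin v)), IsPD v k t lam B ∧ Multiset.card B = n}

lemma le_add_choose (lam : ℕ) : ∀ m : ℕ, m ≤ lam + m.choose (lam+1) := by
  intro m
  induction m with
  | zero => simp
  | succ m ih =>
    rcases Nat.lt_or_ge m lam with h | h
    · omega
    · have h1 : (m+1).choose (lam+1) = m.choose lam + m.choose (lam+1) :=
        Nat.choose_succ_succ m lam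
      have h2 : 0 < m.choose lam := Nat.choose_pos h
      omega

lemma countP_eq_sum_map {α : Type*} (p : α → Prop) [DecidablePred p] (M : Multiset α) :
    M.countP p = (M.map (fun b => if p b then 1 else 0)).sum := by
  induction M using Multiset.induction_on with
  | empty => simp
  | cons a s ih => by_cases h : p a <;> simp [Multiset.countP_cons, ih, h, add_comm]

lemma countP_powersetCard {α : Type*} (p : α → Prop) [DecidablePred p] (s : Multiset α) :
    ∀ mm : ℕ, (s.powersetCard mm).countP (fun S => ∀ b ∈ S, p b) = (s.countP p).choose mm := by
  induction s using Multiset.induction_on with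
  | empty =>
    intro mm
    cases mm with
    | zero =>
      rw [Multiset.powersetCard_zero_left]
      rw [Multiset.countP_eq_card_filter]
      rw [Multiset.filter_eq_self.2 (by intro S hS; simp at hS; subst hS; simp)]
      simp
    | succ mm => simp [Multiset.powersetCard_zero_right]
  | cons a s ih =>
    intro mm
    cases mm with
    | zero =>
      rw [Multiset.powersetCard_zero_left]
      rw [Multiset.countP_eq_card_filter]
      rw [Multiset.filter_eq_self.2 (by intro S hS; simp at hS; subst hS; simp)]
      simp
    | succ mm =>
      rw [Multiset.powersetCard_cons, Multiset.countP_add, ih, Multiset.countP_map]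
      have hfil : Multiset.card
          (Multiset.filter (fun S => ∀ b ∈ (a ::ₘ S), p b) (s.powersetCard mm))
          = if p a then (s.countP p).choose mm else 0 := by
        by_cases h : p a
        · rw [if_pos h, ← ih mm, Multiset.countP_eq_card_filter]
          congr 1
          apply Multiset.filter_congr
          intro S hS
          simp [h]
        · rw [if_neg h]
          rw [Multiset.card_eq_zero, Multiset.filter_eq_nil]
          intro S hS hall
          exact h (hall a (Multiset.mem_cons_self a S))
      rw [hfil, Multiset.countP_cons]
      by_cases h : p a
      · simp only [if_pos h]
        have := Nat.choose_succ_succ (s.countP p) mm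
        simp only [Nat.succ_eq_add_one] at this
        omega
      · simp [h]

lemma finset_sum_multiset_sum_swap {α β : Type*} (s : Finset α) (M : Multiset β) (f : α → β → ℕ) :
    ∑ x ∈ s, (M.map (f x)).sum = (M.map (fun b => ∑ x ∈ s, f x b)).sum :=
  Multiset.sum_map_sum_map s.val M (f := f)

lemma countP_irrel {α : Type*} (p : α → Prop) (i1 i2 : DecidablePred p) (s : Multiset α) :
    @Multiset.countP α p i1 s = @Multiset.countP α p i2 s := by
  have : i1 = i2 := Subsingleton.elim _ _
  rw [this]

lemma pd_count_bound (v k t lam N : ℕ) (ht : 2 ≤ t) (B : Multiset (Finset (Fin v)))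
    (hB : IsPD v k t lam B) (hcard : Multiset.card B = N) :
    N * k ≤ lam * v + (t-1) * N.choose (lam+1) := by
  -- sum of freq = N * k
  have key1 : ∑ x : Fin v, freq B x = N * k := by
    calc ∑ x : Fin v, freq B x
        = ∑ x : Fin v, (B.map (fun b => if x ∈ b then 1 else 0)).sum :=
          Finset.sum_congr rfl (fun x _ => countP_eq_sum_map _ _)
      _ = (B.map (fun b => ∑ x : Fin v, if x ∈ b then 1 else 0)).sum :=
          finset_sum_multiset_sum_swap _ _ _
      _ = (B.map (fun b => b.card)).sum := by
          congr 1
          apply Multiset.map_congr rfl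
          intro b _
          rw [Finset.sum_ite_mem, Finset.univ_inter, Finset.sum_const, smul_eq_mul, mul_one]
      _ = (B.map (fun _ => k)).sum := by
          congr 1
          exact Multiset.map_congr rfl (fun b hb => hB.1 b hb)
      _ = N * k := by
          rw [Multiset.map_const', Multiset.sum_replicate, hcard, smul_eq_mul]
  have key2 : ∑ x : Fin v, (freq B x).choose (lam+1) ≤ (t-1) * N.choose (lam+1) := by
    have hub : ∀ S ∈ B.powersetCard (lam+1),
        (Finset.univ.filter (fun x : Fin v => ∀ b ∈ S, x ∈ b)).card ≤ t - 1 := by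
      intro S hS
      rw [Multiset.mem_powersetCard] at hS
      by_contra hgt
      push_neg at hgt
      have hge : t ≤ (Finset.univ.filter (fun x : Fin v => ∀ b ∈ S, x ∈ b)).card := by omega
      obtain ⟨T, hTsub, hTcard⟩ := Finset.exists_subset_card_eq hge
      have hall : ∀ b ∈ S, T ⊆ b := by
        intro b hb x hx
        have := hTsub hx
        rw [Finset.mem_filter] at this
        exact this.2 b hb
      have hc1 : Multiset.countP (fun b => T ⊆ b) S = lam + 1 := by
        rw [Multiset.countP_eq_card.2 hall, hS.2]
      have hc2 : Multiset.countP (fun b => T ⊆ b) S ≤ Multiset.countP (fun b => T ⊆ b) B :=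
        Multiset.countP_le_of_le _ hS.1
      have := hB.2 T hTcard
      omega
    calc ∑ x : Fin v, (freq B x).choose (lam+1)
        = ∑ x : Fin v, (B.powersetCard (lam+1)).countP (fun S => ∀ b ∈ S, x ∈ b) :=
          Finset.sum_congr rfl (fun x _ =>
            ((countP_powersetCard (fun b => x ∈ b) B (lam+1)).symm).trans
              (countP_irrel _ _ _ _))
      _ = ∑ x : Fin v, ((B.powersetCard (lam+1)).map
            (fun S => if (∀ b ∈ S, x ∈ b) then 1 else 0)).sum :=
          Finset.sum_congr rfl (fun x _ => countP_eq_sum_map _ _)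
      _ = ((B.powersetCard (lam+1)).map
            (fun S => ∑ x : Fin v, if (∀ b ∈ S, x ∈ b) then 1 else 0)).sum :=
          finset_sum_multiset_sum_swap _ _ _
      _ = ((B.powersetCard (lam+1)).map
            (fun S => (Finset.univ.filter (fun x : Fin v => ∀ b ∈ S, x ∈ b)).card)).sum := by
          congr 1
          apply Multiset.map_congr rfl
          intro S _
          rw [Finset.sum_boole]
          simp
      _ ≤ Multiset.card ((B.powersetCard (lam+1)).map
            (fun S => (Finset.univ.filter (fun x : Fin v => ∀ b ∈ S, x ∈ b)).card)) • (t-1) := by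
          apply Multiset.sum_le_card_nsmul
          intro c hc
          rw [Multiset.mem_map] at hc
          obtain ⟨S, hS, rfl⟩ := hc
          exact hub S hS
      _ = (t-1) * N.choose (lam+1) := by
          rw [Multiset.card_map, Multiset.card_powersetCard, hcard, smul_eq_mul, mul_comm]
  have key3 : ∑ x : Fin v, freq B x ≤
      ∑ x : Fin v, (lam + (freq B x).choose (lam+1)) :=
    Finset.sum_le_sum (fun x _ => le_add_choose lam (freq B x))
  rw [Finset.sum_add_distrib, Finset.sum_const, Finset.card_univ, Fintype.card_fin,
    smul_eq_mul] at key3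
  have hmc : v * lam = lam * v := mul_comm _ _
  omega

lemma mod_inj (P a b : ℕ) (h : a % P = b % P) (h2 : a < b + P) (h3 : b < a + P) : a = b := by
  rcases le_total a b with hle | hle
  · have hd := (Nat.modEq_iff_dvd' hle).1 h
    have := Nat.eq_zero_of_dvd_of_lt hd
    rcases Nat.eq_zero_or_pos (b - a) with h0 | hpos
    · omega
    · have hlt : b - a < P := by omega
      have := Nat.eq_zero_of_dvd_of_lt hd hlt
      omega
  · have hd := (Nat.modEq_iff_dvd' hle).1 h.symm
    rcases Nat.eq_zero_or_pos (a - b) with h0 | hpos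
    · omega
    · have hlt : a - b < P := by omega
      have := Nat.eq_zero_of_dvd_of_lt hd hlt
      omega

lemma aux_div_count (m c : ℕ) (hm : 0 < m) (Q : ℕ → Prop) [DecidablePred Q] :
    ((Finset.range (m*c)).filter (fun u => Q (u/m))).card
      = m * ((Finset.range c).filter Q).card := by
  have key : ((Finset.range (m*c)).filter (fun u => Q (u/m))).card
      = (((Finset.range c).filter Q) ×ˢ Finset.range m).card := by
    apply Finset.card_nbij' (fun u => (u/m, u%m)) (fun p => p.1*m + p.2)
    · intro u hu
      simp only [Finset.mem_coe, Finset.mem_filter, Finset.mem_range] at hu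
      simp only [Finset.mem_coe, Finset.mem_product, Finset.mem_filter, Finset.mem_range]
      refine ⟨⟨?_, hu.2⟩, Nat.mod_lt _ hm⟩
      have hcm : m*c = c*m := mul_comm m c
      exact (Nat.div_lt_iff_lt_mul hm).2 (by omega)
    · rintro ⟨d, j⟩ hp
      simp only [Finset.mem_coe, Finset.mem_product, Finset.mem_filter, Finset.mem_range] at hp
      obtain ⟨⟨hd, hQ⟩, hj⟩ := hp
      have hdiv : (d*m + j)/m = d := by
        apply Nat.div_eq_of_lt_le
        · omega
        · have : (d+1)*m = d*m + m := by ring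
          omega
      simp only [Finset.mem_coe, Finset.mem_filter, Finset.mem_range]
      constructor
      · have h1 : (d+1)*m ≤ c*m := Nat.mul_le_mul_right m (by omega)
        have h2 : (d+1)*m = d*m + m := by ring
        have h3 : c*m = m*c := by ring
        omega
      · rw [hdiv]; exact hQ
    · intro u hu
      simp only [Prod.mk.injEq]
      have h1 := Nat.div_add_mod u m
      have h2 : m * (u/m) = u/m * m := mul_comm _ _
      omega
    · rintro ⟨d, j⟩ hp
      simp only [Finset.mem_coe, Finset.mem_product, Finset.mem_filter, Finset.mem_range] at hp
      obtain ⟨⟨hd, hQ⟩, hj⟩ := hp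
      have hdiv : (d*m + j)/m = d := by
        apply Nat.div_eq_of_lt_le
        · omega
        · have : (d+1)*m = d*m + m := by ring
          omega
      have hmod : (d*m + j) % m = j := by
        have : d*m + j = j + d*m := by ring
        rw [this, Nat.add_mul_mod_self_right, Nat.mod_eq_of_lt hj]
      simp [hdiv, hmod]
  rw [key, Finset.card_product, Finset.card_range, mul_comm]

lemma card_powersetCard_filter_mem {N : ℕ} (i : Fin N) (s : ℕ) :
    (((Finset.univ : Finset (Fin N)).powersetCard (s+1)).filter (fun S => i ∈ S)).card
      = (N - 1).choose s := by
  have key : (((Finset.univ : Finset (Fin N)).powersetCard (s+1)).filter (fun S => i ∈ S)).card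
      = ((Finset.univ.erase i).powersetCard s).card := by
    apply Finset.card_nbij' (fun S => S.erase i) (fun T => insert i T)
    · intro S hS
      simp only [Finset.mem_coe, Finset.mem_filter, Finset.mem_powersetCard] at hS ⊢
      obtain ⟨⟨hsub, hcard⟩, hi⟩ := hS
      refine ⟨Finset.erase_subset_erase i hsub, ?_⟩
      rw [Finset.card_erase_of_mem hi, hcard]
      omega
    · intro T hT
      simp only [Finset.mem_coe, Finset.mem_powersetCard] at hT
      obtain ⟨hsub, hcard⟩ := hT
      have hiT : i ∉ T := fun h => (Finset.mem_erase.1 (hsub h)).1 rfl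
      simp only [Finset.mem_coe, Finset.mem_filter, Finset.mem_powersetCard]
      exact ⟨⟨Finset.subset_univ _, by rw [Finset.card_insert_of_notMem hiT, hcard]⟩,
        Finset.mem_insert_self _ _⟩
    · intro S hS
      simp only [Finset.mem_coe, Finset.mem_filter] at hS
      exact Finset.insert_erase hS.2
    · intro T hT
      simp only [Finset.mem_coe, Finset.mem_powersetCard] at hT
      have hiT : i ∉ T := fun h => (Finset.mem_erase.1 (hT.1 h)).1 rfl
      exact Finset.erase_insert hiT
  rw [key, Finset.card_powersetCard, Finset.card_erase_of_mem (Finset.mem_univ i),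
    Finset.card_univ, Fintype.card_fin]

lemma exists_pd (v k n lam m : ℕ) (hm0 : 0 < m) (hlam0 : 0 < lam) (hn0 : 0 < n)
    (hkv : k ≤ v) (hk : m * n.choose lam < k)
    (h1 : n * k ≤ lam * v + m * n.choose (lam+1)) :
    ∃ B : Multiset (Finset (Fin v)), IsPD v k (m+1) lam B ∧ Multiset.card B = n := by
  -- abbreviations
  set q := (n-1).choose lam with hqdef
  set c := n.choose (lam+1) with hcdef
  set bb := (n-1).choose (lam+1) with hbbdef
  have hq : q ≤ n.choose lam := Nat.choose_le_choose lam (by omega)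
  have hmq : m * q < k := lt_of_le_of_lt (Nat.mul_le_mul_left m hq) hk
  set r := k - m*q with hrdef
  have hr : 0 < r := by omega
  have hkr : k = m*q + r := by omega
  have hid : n*q = c*(lam+1) := by
    have h := Nat.add_one_mul_choose_eq (n-1) lam
    have hn1 : n - 1 + 1 = n := by omega
    simp only [Nat.succ_eq_add_one, hn1] at h
    exact h
  have h5 : n*(m*q) = lam*(m*c) + m*c := by
    have : n*(m*q) = m*(n*q) := by ring
    rw [this, hid]; ring
  have hnk : n*k = lam*(m*c) + m*c + n*r := by
    have : n*k = n*(m*q) + n*r := by rw [hkr]; ring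
    omega
  have hmcv : m*c ≤ v := by
    have h7 : lam*(m*c) ≤ lam*v := by omega
    exact Nat.le_of_mul_le_mul_left h7 hlam0
  set P := v - m*c with hPdef
  have hPv : m*c + P = v := by omega
  have hnrP : n*r ≤ lam*P := by
    have h6 : lam * v = lam*P + lam*(m*c) := by
      rw [← Nat.left_distrib]
      congr 1
      omega
    omega
  have hbbc : c = q + bb := by
    have h := Nat.choose_succ_succ (n-1) lam
    have hn1 : n - 1 + 1 = n := by omega
    simp only [Nat.succ_eq_add_one, hn1] at h
    exact h
  have hvP : k + m*bb ≤ v := by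
    rcases Nat.lt_or_ge (n-1) (lam+1) with hcase | hcase
    · have hbb0 : bb = 0 := Nat.choose_eq_zero_of_lt hcase
      rw [hbb0, Nat.mul_zero]
      omega
    · -- n ≥ lam + 2
      have hnlam : lam + 2 ≤ n := by omega
      have hcr : c*(lam+1) = n.choose lam * (n - lam) := Nat.choose_succ_right_eq n lam
      have e1 : n*k = lam*k + (n-lam)*k := by
        rw [← Nat.add_mul]
        congr 1
        omega
      have e2 : (n-lam)*(m * n.choose lam) + (n-lam) ≤ (n-lam)*k := by
        have := Nat.mul_le_mul_left (n-lam) hk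
        have h8 : (n-lam)*(m * n.choose lam + 1) = (n-lam)*(m*n.choose lam) + (n-lam) := by ring
        have h9 : m * n.choose lam + 1 ≤ k := hk
        have := Nat.mul_le_mul_left (n-lam) h9
        omega
      have e3 : (n-lam)*(m * n.choose lam) = m*c + lam*(m*c) := by
        have : (n-lam)*(m*n.choose lam) = m*(n.choose lam * (n-lam)) := by ring
        rw [this, ← hcr]; ring
      have e4 : lam*(m*bb) ≤ lam*(m*c) := by
        have : m*bb ≤ m*c := Nat.mul_le_mul_left m (by omega)
        exact Nat.mul_le_mul_left lam this
      have e5 : lam*k + lam*(m*bb) ≤ lam*v := by omega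
      have e6 : lam*(k + m*bb) ≤ lam*v := by
        rw [Nat.left_distrib]; omega
      exact Nat.le_of_mul_le_mul_left e6 hlam0
  have hrP : r ≤ P := by
    have hmc2 : m*c = m*q + m*bb := by rw [hbbc, Nat.left_distrib]
    omega
  have hP0 : 0 < P := by omega
  have hv0 : 0 < v := by omega
  -- the list of (lam+1)-subsets of Fin n
  set L := ((Finset.univ : Finset (Fin n)).powersetCard (lam+1)).toList with hLdef
  have hL : L.length = c := by
    rw [hLdef, Finset.length_toList, Finset.card_powersetCard, Finset.card_univ,
      Fintype.card_fin]
  have hLnd : L.Nodup := Finset.nodup_toList _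
  have hLget : ∀ d, d < c → L.getD d ∅ ∈ (Finset.univ : Finset (Fin n)).powersetCard (lam+1) := by
    intro d hd
    have hd' : d < L.length := by omega
    rw [List.getD_eq_getElem _ _ hd']
    exact Finset.mem_toList.1 (List.getElem_mem hd')
  have hLcard : ∀ d, d < c → (L.getD d ∅).card = lam+1 := by
    intro d hd
    exact (Finset.mem_powersetCard.1 (hLget d hd)).2
  have hLinj : ∀ d1, d1 < c → ∀ d2, d2 < c → L.getD d1 ∅ = L.getD d2 ∅ → d1 = d2 := by
    intro d1 hd1 d2 hd2 heq
    have hd1' : d1 < L.length := by omega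
    have hd2' : d2 < L.length := by omega
    rw [List.getD_eq_getElem _ _ hd1', List.getD_eq_getElem _ _ hd2'] at heq
    have h9 := (hLnd.getElem_inj_iff).1 heq
    exact h9
  -- the filler sets
  obtain ⟨fill, hfmem, hfcard⟩ :
      ∃ fill : ℕ → Finset (Fin n),
        (∀ p (i : Fin n), i ∈ fill p ↔ ∃ j, i.val*r ≤ j ∧ j < i.val*r + r ∧ j % P = p) ∧
        (∀ p, (fill p).card ≤ lam) := by
    refine ⟨fun p => ((Finset.range (n*r)).filter (fun j => j % P = p)).image
      (fun j => ⟨j / r % n, Nat.mod_lt _ hn0⟩), ?_, ?_⟩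
    · intro p i
      constructor
      · intro h
        simp only [Finset.mem_image, Finset.mem_filter, Finset.mem_range] at h
        obtain ⟨j, ⟨hj1, hj2⟩, hj3⟩ := h
        have hjr : j / r < n := (Nat.div_lt_iff_lt_mul hr).2 hj1
        have hmod : j / r % n = j / r := Nat.mod_eq_of_lt hjr
        have hival : i.val = j / r := by
          have := congrArg Fin.val hj3
          simp only [hmod] at this
          exact this.symm
        refine ⟨j, ?_, ?_, hj2⟩
        · rw [hival]; exact Nat.div_mul_le_self j r
        · have e := Nat.div_add_mod j r
          have e2 : j % r < r := Nat.mod_lt _ hr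
          have e3 : r * (j/r) = i.val * r := by rw [hival]; ring
          omega
      · rintro ⟨j, h1j, h2j, h3j⟩
        simp only [Finset.mem_image, Finset.mem_filter, Finset.mem_range]
        have hi1 : i.val + 1 ≤ n := i.isLt
        have hle : (i.val+1)*r ≤ n*r := Nat.mul_le_mul_right r hi1
        have heq1 : (i.val+1)*r = i.val*r + r := by ring
        have hjn : j < n*r := by omega
        have hdiv : j / r = i.val := by
          apply Nat.div_eq_of_lt_le h1j
          omega
        refine ⟨j, ⟨hjn, h3j⟩, ?_⟩
        apply Fin.ext
        simp only [hdiv]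
        exact Nat.mod_eq_of_lt i.isLt
    · intro p
      apply le_trans Finset.card_image_le
      have hcr := Finset.card_range lam
      rw [← hcr]
      apply Finset.card_le_card_of_injOn (fun j => j / P)
      · intro j hj
        simp only [Finset.mem_coe, Finset.mem_filter, Finset.mem_range] at hj
        simp only [Finset.mem_coe, Finset.mem_range]
        exact (Nat.div_lt_iff_lt_mul hP0).2 (by omega)
      · intro j1 hj1 j2 hj2 hdd
        simp only [Finset.coe_filter, Set.mem_setOf_eq, Finset.mem_range] at hj1 hj2
        simp only at hdd
        have e1 := Nat.div_add_mod j1 P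
        have e2 := Nat.div_add_mod j2 P
        rw [hdd] at e1
        omega
  -- the incidence function
  obtain ⟨A, hAc, hAf⟩ :
      ∃ A : ℕ → Finset (Fin n),
        (∀ u, u < m*c → A u = L.getD (u/m) ∅) ∧
        (∀ u, ¬ u < m*c → A u = fill (u - m*c)) :=
    ⟨fun u => if u < m*c then L.getD (u/m) ∅ else fill (u - m*c),
      fun u hu => if_pos hu, fun u hu => if_neg hu⟩
  -- the blocks
  obtain ⟨blk, hblkmem⟩ :
      ∃ blk : Fin n → Finset (Fin v), ∀ (i : Fin n) (x : Fin v), x ∈ blk i ↔ i ∈ A x.val :=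
    ⟨fun i => Finset.univ.filter (fun x : Fin v => i ∈ A x.val),
      fun i x => by simp [Finset.mem_filter]⟩
  -- block cardinality
  have hblkcard : ∀ i : Fin n, (blk i).card = k := by
    intro i
    have hcard1 : (blk i).card = ((Finset.range v).filter (fun u => i ∈ A u)).card := by
      apply Finset.card_nbij' (fun x : Fin v => x.val) (fun u => (⟨u % v, Nat.mod_lt _ hv0⟩ : Fin v))
      · intro x hx
        simp only [Finset.mem_coe, Finset.mem_filter, Finset.mem_range]
        exact ⟨x.isLt, (hblkmem i x).1 hx⟩
      · intro u hu
        simp only [Finset.mem_coe, Finset.mem_filter, Finset.mem_range] at hu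
        apply (hblkmem i _).2
        simp only [Nat.mod_eq_of_lt hu.1]
        exact hu.2
      · intro x hx
        apply Fin.ext
        simp [Nat.mod_eq_of_lt x.isLt]
      · intro u hu
        simp only [Finset.mem_coe, Finset.mem_filter, Finset.mem_range] at hu
        simp [Nat.mod_eq_of_lt hu.1]
      
    have hsplit : (Finset.range v).filter (fun u => i ∈ A u)
        = ((Finset.range (m*c)).filter (fun u => i ∈ A u))
          ∪ ((Finset.Ico (m*c) v).filter (fun u => i ∈ A u)) := by
      rw [← Finset.filter_union]
      congr 1
      rw [Finset.range_eq_Ico, Finset.range_eq_Ico]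
      exact (Finset.Ico_union_Ico_eq_Ico (Nat.zero_le _) hmcv).symm
    have hdisj : Disjoint ((Finset.range (m*c)).filter (fun u => i ∈ A u))
        ((Finset.Ico (m*c) v).filter (fun u => i ∈ A u)) := by
      rw [Finset.disjoint_left]
      intro a ha hb
      simp only [Finset.mem_filter, Finset.mem_range] at ha
      simp only [Finset.mem_filter, Finset.mem_Ico] at hb
      omega
    have hcommon : ((Finset.range (m*c)).filter (fun u => i ∈ A u)).card = m * q := by
      have e1 : (Finset.range (m*c)).filter (fun u => i ∈ A u)
          = (Finset.range (m*c)).filter (fun u => i ∈ L.getD (u/m) ∅) := by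
        apply Finset.filter_congr
        intro u hu
        rw [hAc u (Finset.mem_range.1 hu)]
      rw [e1, aux_div_count m c hm0 (fun d => i ∈ L.getD d ∅)]
      congr 1
      have e2 : ((Finset.range c).filter (fun d => i ∈ L.getD d ∅)).card
          = (((Finset.univ : Finset (Fin n)).powersetCard (lam+1)).filter
              (fun S => i ∈ S)).card := by
        apply Finset.card_nbij (fun d => L.getD d ∅)
        · intro d hd
          simp only [Finset.mem_coe, Finset.mem_filter, Finset.mem_range] at hd
          exact Finset.mem_filter.2 ⟨hLget d hd.1, hd.2⟩
        · intro d1 hd1 d2 hd2 heq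
          simp only [Finset.coe_filter, Set.mem_setOf_eq, Finset.mem_range] at hd1 hd2
          exact hLinj d1 hd1.1 d2 hd2.1 heq
        · intro S hS
          simp only [Finset.coe_filter, Set.mem_setOf_eq] at hS
          obtain ⟨hS1, hS2⟩ := hS
          have hSL : S ∈ L := Finset.mem_toList.2 hS1
          obtain ⟨idx, hidx⟩ := List.mem_iff_get.1 hSL
          have hidxc : idx.val < c := by
            have := idx.isLt
            omega
          have hgetd : L.getD idx.val ∅ = S := by
            rw [List.getD_eq_getElem _ _ idx.isLt]
            exact hidx
          refine ⟨idx.val, ?_, hgetd⟩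
          simp only [Finset.coe_filter, Set.mem_setOf_eq, Finset.mem_range]
          rw [hgetd]
          exact ⟨hidxc, hS2⟩
      rw [e2, card_powersetCard_filter_mem i lam]
    have hfiller : ((Finset.Ico (m*c) v).filter (fun u => i ∈ A u)).card = r := by
      have e2 : (Finset.Ico (m*c) v).filter (fun u => i ∈ A u)
          = (Finset.Ico (i.val*r) (i.val*r + r)).image (fun j => m*c + j % P) := by
        ext u
        simp only [Finset.mem_filter, Finset.mem_Ico, Finset.mem_image]
        constructor
        · rintro ⟨⟨hu1, hu2⟩, hu3⟩
          rw [hAf u (by omega)] at hu3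
          obtain ⟨j, hj1, hj2, hj3⟩ := (hfmem _ i).1 hu3
          exact ⟨j, ⟨hj1, hj2⟩, by omega⟩
        · rintro ⟨j, ⟨hj1, hj2⟩, rfl⟩
          have hjP : j % P < P := Nat.mod_lt _ hP0
          refine ⟨⟨by omega, by omega⟩, ?_⟩
          rw [hAf _ (by omega)]
          exact (hfmem _ i).2 ⟨j, hj1, hj2, by omega⟩
      rw [e2, Finset.card_image_of_injOn, Nat.card_Ico]
      · omega
      · intro j1 hj1 j2 hj2 heq
        simp only [Finset.coe_Ico, Set.mem_Ico] at hj1 hj2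
        simp only [add_right_inj] at heq
        exact mod_inj P j1 j2 heq (by omega) (by omega)
    rw [hcard1, hsplit, Finset.card_union_of_disjoint hdisj, hcommon, hfiller]
    omega
  -- assemble
  refine ⟨Multiset.map blk (Finset.univ : Finset (Fin n)).val, ⟨?_, ?_⟩, ?_⟩
  · intro b hb
    rw [Multiset.mem_map] at hb
    obtain ⟨i, _, rfl⟩ := hb
    exact hblkcard i
  · -- packing condition
    intro T hT
    have hcnt : Multiset.countP (fun b => T ⊆ b)
        (Multiset.map blk (Finset.univ : Finset (Fin n)).val)
        = (Finset.univ.filter (fun i : Fin n => T ⊆ blk i)).card := by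
      rw [Multiset.countP_map]
      rw [← Finset.filter_val]
      rfl
    rw [hcnt]
    by_contra hgt
    push_neg at hgt
    have hge : lam + 1 ≤ (Finset.univ.filter (fun i : Fin n => T ⊆ blk i)).card := hgt
    obtain ⟨S, hSF, hScard⟩ := Finset.exists_subset_card_eq hge
    have hSpw : S ∈ (Finset.univ : Finset (Fin n)).powersetCard (lam+1) :=
      Finset.mem_powersetCard.2 ⟨Finset.subset_univ _, hScard⟩
    have hSL : S ∈ L := Finset.mem_toList.2 hSpw
    obtain ⟨idx, hidx⟩ := List.mem_iff_get.1 hSL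
    have hd : idx.val < c := by
      have := idx.isLt
      omega
    have hgetd : L.getD idx.val ∅ = S := by
      rw [List.getD_eq_getElem _ _ idx.isLt]
      exact hidx
    have hxT : ∀ x ∈ T, x.val < m*c ∧ x.val / m = idx.val := by
      intro x hx
      have hSA : S ⊆ A x.val := by
        intro i hiS
        have hiF := hSF hiS
        rw [Finset.mem_filter] at hiF
        exact (hblkmem i x).1 (hiF.2 hx)
      by_cases hcm : x.val < m*c
      · rw [hAc _ hcm] at hSA
        have hdx : x.val / m < c := by
          apply (Nat.div_lt_iff_lt_mul hm0).2
          have : m*c = c*m := mul_comm _ _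
          omega
        have hcardA : (L.getD (x.val/m) ∅).card = lam+1 := hLcard _ hdx
        have hSeq : S = L.getD (x.val/m) ∅ :=
          Finset.eq_of_subset_of_card_le hSA (by rw [hcardA, hScard])
        refine ⟨hcm, hLinj _ hdx _ hd ?_⟩
        rw [← hSeq, hgetd]
      · exfalso
        rw [hAf _ hcm] at hSA
        have hle := Finset.card_le_card hSA
        have := hfcard (x.val - m*c)
        omega
    have hTsub : T ⊆ Finset.univ.filter
        (fun x : Fin v => x.val < m*c ∧ x.val/m = idx.val) :=
      fun x hx => Finset.mem_filter.2 ⟨Finset.mem_univ _, hxT x hx⟩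
    have hcard_le : (Finset.univ.filter
        (fun x : Fin v => x.val < m*c ∧ x.val/m = idx.val)).card ≤ m := by
      have hle2 : (Finset.univ.filter
          (fun x : Fin v => x.val < m*c ∧ x.val/m = idx.val)).card
          ≤ (Finset.range m).card := by
        apply Finset.card_le_card_of_injOn (fun x : Fin v => x.val - idx.val*m)
        · intro x hx
          simp only [Finset.mem_coe, Finset.mem_filter] at hx
          obtain ⟨-, hx1, hx2⟩ := hx
          have e1 := Nat.div_add_mod x.val m
          have e2 : x.val % m < m := Nat.mod_lt _ hm0
          rw [hx2] at e1
          have e3 : m * idx.val = idx.val * m := mul_comm _ _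
          simp only [Finset.mem_coe, Finset.mem_range]
          omega
        · intro x1 hx1 x2 hx2 heq
          simp only [Finset.coe_filter, Set.mem_setOf_eq] at hx1 hx2
          obtain ⟨-, hx11, hx12⟩ := hx1
          obtain ⟨-, hx21, hx22⟩ := hx2
          have e1 := Nat.div_add_mod x1.val m
          have e2 := Nat.div_add_mod x2.val m
          rw [hx12] at e1
          rw [hx22] at e2
          have e3 : x1.val % m < m := Nat.mod_lt _ hm0
          have e4 : x2.val % m < m := Nat.mod_lt _ hm0
          have e5 : m * idx.val = idx.val * m := mul_comm _ _
          simp only at heq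
          apply Fin.ext
          omega
      simpa using hle2
    have := Finset.card_le_card hTsub
    omega
  · rw [Multiset.card_map]
    exact (Finset.card_univ).trans (Fintype.card_fin n)

theorem stmt9 (v k t lam n : ℕ) (ht : 2 ≤ t) (htk : t ≤ k) (hkv : k ≤ v) (hlam : 1 ≤ lam)
    (hn : 1 ≤ n)
    (h1 : (n * k : ℤ) - (t - 1) * (n.choose (lam + 1)) ≤ lam * v)
    (h2 : (lam * v : ℤ) < (n + 1) * k - (t - 1) * ((n + 1).choose (lam + 1))) :
    PDN v k t lam = n ∧
    (∃ B : Multiset (Finset (Fin v)), IsPD v k t lam B ∧ Multiset.card B = n) ∧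
    ¬ ∃ B : Multiset (Finset (Fin v)), IsPD v k t lam B ∧ Multiset.card B = n + 1 := by
  have hc1 : ((t - 1 : ℕ) : ℤ) = (t : ℤ) - 1 := by omega
  have hps : (((n+1).choose (lam+1) : ℕ) : ℤ)
      = ((n.choose lam : ℕ) : ℤ) + ((n.choose (lam+1) : ℕ) : ℤ) := by
    exact_mod_cast congrArg (Nat.cast : ℕ → ℤ) (Nat.choose_succ_succ n lam)
  rw [← hc1] at h1 h2
  have hk : (t-1) * n.choose lam < k := by
    have hz : (((t-1) * n.choose lam : ℕ) : ℤ) < (k : ℤ) := by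
      push_cast
      rw [hps] at h2
      push_cast at h1 h2
      nlinarith [h1, h2]
    exact_mod_cast hz
  have h1' : n * k ≤ lam * v + (t-1) * n.choose (lam+1) := by
    have hz : ((n*k : ℕ) : ℤ) ≤ ((lam * v + (t-1) * n.choose (lam+1) : ℕ) : ℤ) := by
      push_cast
      push_cast at h1
      linarith [h1]
    exact_mod_cast hz
  have htm : t = (t - 1) + 1 := by omega
  have hex : ∃ B : Multiset (Finset (Fin v)), IsPD v k t lam B ∧ Multiset.card B = n := by
    obtain ⟨B, hB, hBc⟩ := exists_pd v k n lam (t-1) (by omega) (by omega) (by omega) hkv hk h1'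
    rw [htm]
    exact ⟨B, hB, hBc⟩
  have hnon : ¬ ∃ B : Multiset (Finset (Fin v)), IsPD v k t lam B ∧ Multiset.card B = n + 1 := by
    rintro ⟨B, hB, hBc⟩
    have hbd := pd_count_bound v k t lam (n+1) ht B hB hBc
    have hz : (((n+1)*k : ℕ) : ℤ)
        ≤ ((lam*v + (t-1)*((n+1).choose (lam+1)) : ℕ) : ℤ) := by exact_mod_cast hbd
    push_cast at hz h2
    linarith [h2, hz]
  have hub : ∀ N ∈ {N | ∃ B : Multiset (Finset (Fin v)),
      IsPD v k t lam B ∧ Multiset.card B = N}, N ≤ n := by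
    rintro N ⟨B, hB, hBc⟩
    by_contra hlt
    push_neg at hlt
    have hlen : n + 1 ≤ B.toList.length := by rw [Multiset.length_toList, hBc]; omega
    have hle : ((B.toList.take (n+1) : List (Finset (Fin v))) : Multiset (Finset (Fin v))) ≤ B := by
      conv_rhs => rw [← Multiset.coe_toList B]
      exact Multiset.coe_le.2 ((List.take_sublist _ _).subperm)
    have hcard' : Multiset.card
        ((B.toList.take (n+1) : List (Finset (Fin v))) : Multiset (Finset (Fin v))) = n + 1 := by
      simp only [Multiset.coe_card, List.length_take]
      omega
    exact hnon ⟨_, ⟨fun b hb => hB.1 b (Multiset.mem_of_le hle hb),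
      fun T hT => le_trans (Multiset.countP_le_of_le _ hle) (hB.2 T hT)⟩, hcard'⟩
  refine ⟨?_, hex, hnon⟩
  apply le_antisymm
  · exact csSup_le ⟨n, hex⟩ hub
  · exact le_csSup ⟨n, hub⟩ hex
end

section
/- Let k ≥ t ≥ 2 and λ ≥ 1 be integers, and let ℓ be the least integer such that (t-1)·C(ℓ, λ) > k. If ℓ·k - (t-1)·C(ℓ, λ+1) ≤ λ·v < ((λ+1)/(λ+2))·(ℓ+1)·k - ((t-1)/(λ+2))·C(ℓ+1, λ+1), then PDN_λ(v,k,t) = ℓ. -/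
open scoped Classical

open Finset

lemma countMod (c n i : ℕ) (hi : i < n) :
    ((Finset.range (c*n)).filter (fun s => s % n = i)).card = c := by
  have hn : 0 < n := Nat.pos_of_ne_zero (by omega)
  have key : ((Finset.range (c*n)).filter (fun s => s % n = i)).card = (Finset.range c).card := by
    apply Finset.card_bij' (fun s _ => s / n) (fun j _ => j * n + i)
    · intro s hs
      simp only [Finset.mem_filter, Finset.mem_range] at hs
      simp only [Finset.mem_range]
      exact Nat.div_lt_of_lt_mul (by rw [mul_comm]; exact hs.1)
    · intro j hj
      simp only [Finset.mem_range] at hj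
      simp only [Finset.mem_filter, Finset.mem_range]
      refine ⟨?_, ?_⟩
      · calc j*n + i < j*n + n := by omega
          _ = (j+1)*n := by ring
          _ ≤ c*n := Nat.mul_le_mul_right n (by omega)
      · have : (j*n + i) % n = i % n := by rw [mul_comm]; exact Nat.mul_add_mod n j i
        rw [this]; exact Nat.mod_eq_of_lt hi
    · intro s hs
      simp only [Finset.mem_filter, Finset.mem_range] at hs
      conv_rhs => rw [← Nat.div_add_mod s n]
      rw [hs.2, mul_comm]
    · intro j hj
      have : (j*n + i) = i + j*n := by ring
      rw [this, Nat.add_mul_div_right i j hn, Nat.div_eq_of_lt hi]; omega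
  rw [key, Finset.card_range]

lemma sumModCycle (q n : ℕ) (f : ℕ → ℕ) :
    (∑ j ∈ Finset.range (q*n), f (j % n)) = q * ∑ j ∈ Finset.range n, f j := by
  induction q with
  | zero => simp
  | succ q ih =>
    have h1 : (q+1)*n = q*n + n := by ring
    rw [h1, Finset.range_eq_Ico, ← Finset.sum_Ico_consecutive _ (Nat.zero_le _) (Nat.le_add_right _ n)]
    rw [← Finset.range_eq_Ico, ih, Finset.sum_Ico_eq_sum_range]
    have h2 : ∀ j ∈ Finset.range ((q*n+n) - q*n), f ((q*n + j) % n) = f (j % n) := by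
      intro j _
      have : (q*n + j) % n = j % n := by rw [mul_comm]; exact Nat.mul_add_mod n q j
      rw [this]
    rw [Finset.sum_congr rfl h2]
    have h3 : (q*n+n) - q*n = n := by omega
    rw [h3]
    have h4 : ∀ j ∈ Finset.range n, f (j % n) = f j := by
      intro j hj; rw [Nat.mod_eq_of_lt (Finset.mem_range.mp hj)]
    rw [Finset.sum_congr rfl h4]; ring

lemma cntSubsets {α : Type*} [DecidableEq α] [Fintype α] (r : ℕ) (i : α) :
    ((Finset.powersetCard (r+1) (Finset.univ : Finset α)).filter (fun A => i ∈ A)).card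
      = (Fintype.card α - 1).choose r := by
  have h1 : ((Finset.univ : Finset α).erase i).card = Fintype.card α - 1 := by
    rw [Finset.card_erase_of_mem (Finset.mem_univ i), Finset.card_univ]
  rw [← h1, ← Finset.card_powersetCard]
  refine Finset.card_bij' (fun A _ => A.erase i) (fun S _ => insert i S) ?hi ?hj ?li ?ri
  case hi =>
    intro A hA
    simp only [Finset.mem_filter, Finset.mem_powersetCard] at hA
    simp only [Finset.mem_powersetCard]
    constructor
    · intro x hx
      simp only [Finset.mem_erase] at hx ⊢
      exact ⟨hx.1, Finset.mem_univ x⟩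
    · rw [Finset.card_erase_of_mem hA.2, hA.1.2]; omega
  case hj =>
    intro S hS
    simp only [Finset.mem_powersetCard] at hS
    have hiS : i ∉ S := fun h => by simpa using Finset.mem_erase.mp (hS.1 h)
    simp only [Finset.mem_filter, Finset.mem_powersetCard]
    refine ⟨⟨fun x _ => Finset.mem_univ x, ?_⟩, Finset.mem_insert_self i S⟩
    rw [Finset.card_insert_of_notMem hiS, hS.2]
  case li =>
    intro A hA
    simp only [Finset.mem_filter] at hA
    exact Finset.insert_erase hA.2
  case ri =>
    intro S hS
    simp only [Finset.mem_powersetCard] at hS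
    have hiS : i ∉ S := fun h => by simpa using Finset.mem_erase.mp (hS.1 h)
    exact Finset.erase_insert hiS

lemma chooseLB (lam : ℕ) : ∀ f : ℕ, ((lam:ℤ)+1)*f - lam*(lam+2) ≤ (f.choose (lam+1) : ℤ) := by
  intro f
  rcases le_or_gt f lam with h | h
  · have : ((lam:ℤ)+1)*f ≤ (lam+1)*lam := by
      apply mul_le_mul_of_nonneg_left _ (by positivity)
      exact_mod_cast h
    have h0 : (0:ℤ) ≤ (f.choose (lam+1) : ℤ) := by positivity
    nlinarith
  · have h' : lam + 1 ≤ f := h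
    induction f, h' using Nat.le_induction with
    | base =>
      simp only [Nat.choose_self]
      push_cast; nlinarith
    | succ f hf ih =>
      have step : (f+1).choose (lam+1) = f.choose lam + f.choose (lam+1) :=
        Nat.choose_succ_succ f lam
      have hmono : (lam+1 : ℕ) ≤ f.choose lam := by
        calc lam+1 = (lam+1).choose lam := (Nat.choose_succ_self_right lam).symm
          _ ≤ f.choose lam := Nat.choose_le_choose lam hf
      have ih' := ih (by omega)
      have hcast : ((lam:ℤ)+1) ≤ (f.choose lam : ℤ) := by exact_mod_cast hmono
      rw [step]
      push_cast
      linarith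

lemma sumFreq {v k : ℕ} (S : Multiset (Finset (Fin v))) (h : ∀ b ∈ S, b.card = k) :
    ∑ x : Fin v, freq S x = Multiset.card S * k := by
  induction S using Multiset.induction with
  | empty => simp [freq]
  | cons b S ih =>
    have hb : b.card = k := h b (Multiset.mem_cons_self b S)
    have hS : ∀ b' ∈ S, b'.card = k := fun b' hb' => h b' (Multiset.mem_cons_of_mem hb')
    have hfreq : ∀ x, freq (b ::ₘ S) x = freq S x + (if x ∈ b then 1 else 0) := by
      intro x; simp [freq, Multiset.countP_cons]
    simp only [hfreq, Finset.sum_add_distrib, ih hS, Multiset.card_cons]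
    have : (∑ x : Fin v, if x ∈ b then 1 else 0) = b.card := by
      rw [← Finset.card_filter]
      congr 1
      ext x; simp
    rw [this, hb]; ring

lemma sumCountP {α β : Type*} [DecidableEq β] (s : Finset β) (P : Multiset α) (p : β → α → Prop)
    [∀ x, DecidablePred (p x)] [∀ A, Decidable (∀ x ∈ s, ¬ p x A)] :
    ∑ x ∈ s, P.countP (p x) = (P.map (fun A => (s.filter (fun x => p x A)).card)).sum := by
  induction P using Multiset.induction with
  | empty => simp
  | cons A P ih =>
    simp only [Multiset.countP_cons, Multiset.map_cons, Multiset.sum_cons,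
      Finset.sum_add_distrib, ih]
    rw [add_comm]
    congr 1
    rw [Finset.card_filter]

lemma pd_card_le (v k t lam ℓ : ℕ) (ht : 2 ≤ t)
    (h2 : ((lam : ℤ) + 2) * lam * v
        < (lam + 1) * (ℓ + 1) * k - (t - 1) * ((ℓ + 1).choose (lam + 1)))
    (B : Multiset (Finset (Fin v))) (hB : IsPD v k t lam B) :
    Multiset.card B ≤ ℓ := by
  by_contra hcon
  push_neg at hcon
  -- extract a sub-multiset of size ℓ+1
  have hpos : 0 < Multiset.card (Multiset.powersetCard (ℓ+1) B) := by
    rw [Multiset.card_powersetCard]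
    exact Nat.choose_pos hcon
  obtain ⟨S, hS⟩ := Multiset.card_pos_iff_exists_mem.mp hpos
  rw [Multiset.mem_powersetCard] at hS
  obtain ⟨hSB, hScard⟩ := hS
  have hSk : ∀ b ∈ S, b.card = k := fun b hb => hB.1 b (Multiset.mem_of_le hSB hb)
  have hSpack : ∀ T : Finset (Fin v), T.card = t → S.countP (fun b => T ⊆ b) ≤ lam :=
    fun T hT => le_trans (Multiset.countP_le_of_le _ hSB) (hB.2 T hT)
  -- counting inequality
  set P := Multiset.powersetCard (lam+1) S with hP
  have hcardP : Multiset.card P = (ℓ+1).choose (lam+1) := by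
    rw [hP, Multiset.card_powersetCard, hScard]
  -- per-x bound
  have hx : ∀ x : Fin v, (freq S x).choose (lam+1) ≤ P.countP (fun A => ∀ b ∈ A, x ∈ b) := by
    intro x
    have h1 : (freq S x).choose (lam+1)
        = Multiset.card (Multiset.powersetCard (lam+1) (S.filter (fun b => x ∈ b))) := by
      rw [Multiset.card_powersetCard]
      congr 1
      rw [freq, Multiset.countP_eq_card_filter]
    have h2' : Multiset.powersetCard (lam+1) (S.filter (fun b => x ∈ b))
        ≤ P.filter (fun A => ∀ b ∈ A, x ∈ b) := by
      rw [Multiset.le_filter]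
      constructor
      · exact Multiset.powersetCard_mono _ (Multiset.filter_le _ S)
      · intro A hA
        rw [Multiset.mem_powersetCard] at hA
        intro b hb
        have hb' : b ∈ S.filter (fun b => x ∈ b) := Multiset.mem_of_le hA.1 hb
        exact (Multiset.mem_filter.mp hb').2
    calc (freq S x).choose (lam+1)
        = _ := h1
      _ ≤ Multiset.card (P.filter (fun A => ∀ b ∈ A, x ∈ b)) := Multiset.card_le_card h2'
      _ = P.countP (fun A => ∀ b ∈ A, x ∈ b) := (Multiset.countP_eq_card_filter _ _).symm
  -- bound on each intersection
  have hbnd : ∀ cnt ∈ (P.map (fun A => (Finset.univ.filter (fun x : Fin v => ∀ b ∈ A, x ∈ b)).card)),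
      cnt ≤ t-1 := by
    intro cnt hcnt
    rw [Multiset.mem_map] at hcnt
    obtain ⟨A, hA, rfl⟩ := hcnt
    rw [hP, Multiset.mem_powersetCard] at hA
    by_contra hbig
    push_neg at hbig
    have hbig' : t ≤ (Finset.univ.filter (fun x : Fin v => ∀ b ∈ A, x ∈ b)).card := by omega
    obtain ⟨T, hTsub, hTcard⟩ := Finset.exists_subset_card_eq hbig'
    have hall : ∀ b ∈ A, T ⊆ b := by
      intro b hb x hx'
      have := hTsub hx'
      rw [Finset.mem_filter] at this
      exact this.2 b hb
    have hA1 : A.countP (fun b => T ⊆ b) = Multiset.card A :=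
      Multiset.countP_eq_card.mpr hall
    have hge : lam + 1 ≤ S.countP (fun b => T ⊆ b) := by
      calc lam + 1 = Multiset.card A := hA.2.symm
        _ = A.countP (fun b => T ⊆ b) := hA1.symm
        _ ≤ S.countP (fun b => T ⊆ b) := Multiset.countP_le_of_le _ hA.1
    have := hSpack T hTcard
    omega
  -- total bound
  have hbound : ∑ x : Fin v, (freq S x).choose (lam+1) ≤ (t-1) * (ℓ+1).choose (lam+1) := by
    calc ∑ x : Fin v, (freq S x).choose (lam+1)
        ≤ ∑ x : Fin v, P.countP (fun A => ∀ b ∈ A, x ∈ b) :=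
          Finset.sum_le_sum (fun x _ => hx x)
      _ = (P.map (fun A => (Finset.univ.filter (fun x : Fin v => ∀ b ∈ A, x ∈ b)).card)).sum :=
          sumCountP Finset.univ P _
      _ ≤ Multiset.card (P.map (fun A => (Finset.univ.filter (fun x : Fin v => ∀ b ∈ A, x ∈ b)).card)) * (t-1) := by
          have := Multiset.sum_le_card_nsmul _ (t-1) hbnd
          simpa [smul_eq_mul] using this
      _ = (t-1) * (ℓ+1).choose (lam+1) := by rw [Multiset.card_map, hcardP]; ring
  -- lower bound by convexity
  have hsumfreq : ∑ x : Fin v, freq S x = (ℓ+1) * k := by rw [sumFreq S hSk, hScard]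
  have hlow : ((lam:ℤ)+1)*((ℓ+1)*k) - (v:ℤ)*(lam*(lam+2))
      ≤ ((∑ x : Fin v, (freq S x).choose (lam+1) : ℕ) : ℤ) := by
    push_cast
    calc ((lam:ℤ)+1)*((ℓ+1)*k) - (v:ℤ)*(lam*(lam+2))
        = ∑ x : Fin v, (((lam:ℤ)+1) * (freq S x) - lam*(lam+2)) := by
          rw [Finset.sum_sub_distrib, ← Finset.mul_sum, Finset.sum_const, Finset.card_univ,
            Fintype.card_fin]
          have : ((∑ x : Fin v, freq S x : ℕ) : ℤ) = (((ℓ+1) * k : ℕ) : ℤ) :=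
            Nat.cast_inj.mpr hsumfreq
          push_cast at this
          rw [← this]
          push_cast
          ring
      _ ≤ ∑ x : Fin v, ((freq S x).choose (lam+1) : ℤ) :=
          Finset.sum_le_sum (fun x _ => chooseLB lam (freq S x))
  have hub : ((∑ x : Fin v, (freq S x).choose (lam+1) : ℕ) : ℤ)
      ≤ ((t:ℤ)-1) * ((ℓ+1).choose (lam+1)) := by
    have := hbound
    have h' : (((t-1) * (ℓ+1).choose (lam+1) : ℕ) : ℤ) = ((t:ℤ)-1) * ((ℓ+1).choose (lam+1)) := by
      push_cast [Nat.cast_sub (by omega : 1 ≤ t)]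
      ring
    calc ((∑ x : Fin v, (freq S x).choose (lam+1) : ℕ) : ℤ)
        ≤ (((t-1) * (ℓ+1).choose (lam+1) : ℕ) : ℤ) := by exact_mod_cast this
      _ = _ := h'
  linarith

lemma pd_construct (v k t lam ℓ q r m' : ℕ)
    (ht : 2 ≤ t) (hlam : 1 ≤ lam)
    (hlℓ : lam + 1 ≤ ℓ)
    (hqt : q ≤ t - 1)
    (hv : q * (ℓ.choose (lam+1)) + m' = v)
    (hk : q * ((ℓ-1).choose lam) + r = k)
    (hlow : ℓ * r ≤ lam * m') :
    ∃ B : Multiset (Finset (Fin v)), IsPD v k t lam B ∧ Multiset.card B = ℓ := by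
  have ℓpos : 0 < ℓ := by omega
  have hlamℓ : lam < ℓ := by omega
  set N := ℓ.choose (lam+1) with hN
  have hNpos : 0 < N := Nat.choose_pos hlℓ
  set E := Finset.powersetCard (lam+1) (Finset.univ : Finset (Fin ℓ)) with hEdef
  have hE : E.card = N := by
    rw [hEdef, Finset.card_powersetCard, Finset.card_univ, Fintype.card_fin]
  let en : {A // A ∈ E} ≃ Fin N := Finset.equivFinOfCardEq hE
  set eSet : ℕ → Finset (Fin ℓ) :=
    fun i => if h : i < N then ((en.symm ⟨i, h⟩ : {A // A ∈ E}) : Finset (Fin ℓ)) else ∅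
    with heSetDef
  have heSetE : ∀ i, i < N → eSet i ∈ E := by
    intro i hi
    rw [heSetDef]
    simp only [dif_pos hi]
    exact (en.symm ⟨i, hi⟩).2
  have heCard : ∀ i, i < N → (eSet i).card = lam + 1 := by
    intro i hi
    have := heSetE i hi
    rw [hEdef, Finset.mem_powersetCard] at this
    exact this.2
  have heInj : ∀ i j, i < N → j < N → eSet i = eSet j → i = j := by
    intro i j hi hj hij
    rw [heSetDef] at hij
    simp only [dif_pos hi, dif_pos hj] at hij
    have : en.symm ⟨i, hi⟩ = en.symm ⟨j, hj⟩ := Subtype.ext hij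
    have h2 := en.symm.injective this
    simpa using congrArg Fin.val h2
  -- windows for low-degree points
  set W : ℕ → Finset (Fin ℓ) :=
    fun p => (Finset.range (min lam (ℓ*r - p*lam))).image
      (fun u => (⟨(p*lam + u) % ℓ, Nat.mod_lt _ ℓpos⟩ : Fin ℓ)) with hWdef
  have hWcard : ∀ p, (W p).card ≤ lam := by
    intro p
    calc (W p).card ≤ (Finset.range (min lam (ℓ*r - p*lam))).card := Finset.card_image_le
      _ = min lam (ℓ*r - p*lam) := Finset.card_range _
      _ ≤ lam := min_le_left _ _
  -- signatures
  set gnat : ℕ → Finset (Fin ℓ) :=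
    fun j => if j < q*N then eSet (j % N) else W (j - q*N) with hgdef
  set blk : Fin ℓ → Finset (Fin v) :=
    fun i => Finset.univ.filter (fun x : Fin v => i ∈ gnat x.val) with hblkdef
  refine ⟨Multiset.map blk Finset.univ.val, ⟨?_, ?_⟩, ?_⟩
  · -- block sizes
    intro b hb
    rw [Multiset.mem_map] at hb
    obtain ⟨i, _, rfl⟩ := hb
    rw [hblkdef]
    rw [Finset.card_filter]
    rw [Fin.sum_univ_eq_sum_range (fun j => if i ∈ gnat j then 1 else 0) v]
    have hqNv : q*N ≤ v := by omega
    rw [Finset.range_eq_Ico, ← Finset.sum_Ico_consecutive _ (Nat.zero_le (q*N)) hqNv]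
    have hhigh : ∑ j ∈ Finset.Ico 0 (q*N), (if i ∈ gnat j then 1 else 0)
        = q * ((ℓ-1).choose lam) := by
      rw [← Finset.range_eq_Ico]
      have hcong : ∀ j ∈ Finset.range (q*N), (if i ∈ gnat j then 1 else 0)
          = (fun i' => if i ∈ eSet i' then 1 else 0) (j % N) := by
        intro j hj
        rw [Finset.mem_range] at hj
        simp only [hgdef, if_pos hj]
      rw [Finset.sum_congr rfl hcong, sumModCycle q N (fun i' => if i ∈ eSet i' then 1 else 0)]
      congr 1
      -- ∑_{i' < N} [i ∈ eSet i'] = (ℓ-1).choose lam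
      have h1 : ∑ i' ∈ Finset.range N, (if i ∈ eSet i' then 1 else 0)
          = ((Finset.range N).filter (fun i' => i ∈ eSet i')).card := by
        rw [Finset.card_filter]
      rw [h1]
      have hround : ∀ (A) (hA : A ∈ E), eSet ((en ⟨A, hA⟩ : Fin N) : ℕ) = A := by
        intro A hA
        rw [heSetDef]
        simp only [dif_pos (en ⟨A, hA⟩).isLt]
        simp only [Fin.eta, Equiv.symm_apply_apply]
      have h2 : ((Finset.range N).filter (fun i' => i ∈ eSet i')).card
          = (E.filter (fun A => i ∈ A)).card := by
        apply Finset.card_bij (fun i' _ => eSet i')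
        · intro i' hi'
          simp only [Finset.mem_filter, Finset.mem_range] at hi'
          simp only [Finset.mem_filter]
          exact ⟨heSetE i' hi'.1, hi'.2⟩
        · intro i' hi' j' hj' hij
          simp only [Finset.mem_filter, Finset.mem_range] at hi' hj'
          exact heInj i' j' hi'.1 hj'.1 hij
        · intro A hA
          simp only [Finset.mem_filter] at hA
          refine ⟨((en ⟨A, hA.1⟩ : Fin N) : ℕ), ?_, hround A hA.1⟩
          simp only [Finset.mem_filter, Finset.mem_range]
          refine ⟨(en ⟨A, hA.1⟩).isLt, ?_⟩
          rw [hround A hA.1]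
          exact hA.2
      rw [h2]
      have h3 := cntSubsets (α := Fin ℓ) lam i
      rw [← hEdef] at h3
      rw [h3, Fintype.card_fin]
    have hlow' : ∑ j ∈ Finset.Ico (q*N) v, (if i ∈ gnat j then 1 else 0) = r := by
      rw [Finset.sum_Ico_eq_sum_range]
      have hm' : v - q*N = m' := by omega
      rw [hm']
      have hcong : ∀ p ∈ Finset.range m', (if i ∈ gnat (q*N + p) then 1 else 0)
          = (if i ∈ W p then 1 else 0) := by
        intro p _
        have h1 : ¬ (q*N + p < q*N) := by omega
        have h2 : q*N + p - q*N = p := by omega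
        simp only [hgdef, if_neg h1, h2]
      rw [Finset.sum_congr rfl hcong]
      -- indicator = card of index filter
      have hind : ∀ p, (if i ∈ W p then 1 else 0)
          = ((Finset.range (min lam (ℓ*r - p*lam))).filter
              (fun u => (p*lam + u) % ℓ = i.val)).card := by
        intro p
        set F := (Finset.range (min lam (ℓ*r - p*lam))).filter
            (fun u => (p*lam + u) % ℓ = i.val) with hF
        have hone : ∀ a ∈ F, ∀ b ∈ F, a = b := by
          intro a ha b hb
          simp only [hF, Finset.mem_filter, Finset.mem_range] at ha hb
          have hma : (p*lam + a) % ℓ = (p*lam + b) % ℓ := by rw [ha.2, hb.2]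
          have hmeq : a ≡ b [MOD ℓ] := Nat.ModEq.add_left_cancel' (p*lam) hma
          have ha' : a < ℓ := by omega
          have hb' : b < ℓ := by omega
          rw [Nat.ModEq] at hmeq
          rw [Nat.mod_eq_of_lt ha', Nat.mod_eq_of_lt hb'] at hmeq
          exact hmeq
        by_cases hiW : i ∈ W p
        · rw [if_pos hiW]
          rw [hWdef] at hiW
          rw [Finset.mem_image] at hiW
          obtain ⟨u0, hu0, hu0e⟩ := hiW
          have hu0' : u0 ∈ F := by
            simp only [hF, Finset.mem_filter]
            exact ⟨hu0, congrArg Fin.val hu0e⟩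
          have h1 : 1 ≤ F.card := Finset.card_pos.mpr ⟨u0, hu0'⟩
          have h2 : F.card ≤ 1 := Finset.card_le_one.mpr hone
          omega
        · rw [if_neg hiW]
          symm
          rw [Finset.card_eq_zero, Finset.eq_empty_iff_forall_notMem]
          intro u hu
          simp only [hF, Finset.mem_filter] at hu
          apply hiW
          rw [hWdef, Finset.mem_image]
          exact ⟨u, hu.1, Fin.ext hu.2⟩
      rw [Finset.sum_congr rfl (fun p _ => hind p)]
      rw [← Finset.card_sigma]
      have hbij : ((Finset.range m').sigma (fun p => (Finset.range (min lam (ℓ*r - p*lam))).filter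
            (fun u => (p*lam + u) % ℓ = i.val))).card
          = ((Finset.range (ℓ*r)).filter (fun s => s % ℓ = i.val)).card := by
        apply Finset.card_bij (fun pu _ => pu.1 * lam + pu.2)
        · rintro ⟨p, u⟩ hpu
          simp only [Finset.mem_sigma, Finset.mem_filter, Finset.mem_range] at hpu
          simp only [Finset.mem_filter, Finset.mem_range]
          obtain ⟨hp, ⟨hu, hmod⟩⟩ := hpu
          refine ⟨?_, hmod⟩
          have hu' := (lt_min_iff.mp hu).2
          show p * lam + u < ℓ * r
          set P := p * lam with hPd
          set L := ℓ * r with hLd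
          omega
        · rintro ⟨p1, u1⟩ h1 ⟨p2, u2⟩ h2 heq
          simp only [Finset.mem_sigma, Finset.mem_filter, Finset.mem_range] at h1 h2
          have hu1 : u1 < lam := (lt_min_iff.mp h1.2.1).1
          have hu2 : u2 < lam := (lt_min_iff.mp h2.2.1).1
          have hp : p1 = p2 := by
            have e1 : (p1 * lam + u1) / lam = p1 := by
              rw [add_comm, Nat.add_mul_div_right u1 p1 (by omega : 0 < lam),
                Nat.div_eq_of_lt hu1]
              omega
            have e2 : (p2 * lam + u2) / lam = p2 := by
              rw [add_comm, Nat.add_mul_div_right u2 p2 (by omega : 0 < lam),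
                Nat.div_eq_of_lt hu2]
              omega
            rw [← e1, ← e2, heq]
          subst hp
          have heq' : p1 * lam + u1 = p1 * lam + u2 := heq
          have hu : u1 = u2 := Nat.add_left_cancel heq'
          subst hu
          rfl
        · intro s hs
          simp only [Finset.mem_filter, Finset.mem_range] at hs
          have hlampos : 0 < lam := by omega
          have hdm := Nat.div_add_mod s lam
          refine ⟨⟨s / lam, s % lam⟩, ?_, ?_⟩
          · simp only [Finset.mem_sigma, Finset.mem_filter, Finset.mem_range]
            have hp : s / lam < m' := by
              rw [Nat.div_lt_iff_lt_mul hlampos]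
              calc s < ℓ*r := hs.1
                _ ≤ lam * m' := hlow
                _ = m' * lam := by ring
            have hu1 : s % lam < lam := Nat.mod_lt s hlampos
            have heqs : s / lam * lam + s % lam = s := by
              rw [mul_comm]; exact hdm
            refine ⟨hp, ⟨lt_min_iff.mpr ⟨hu1, ?_⟩, ?_⟩⟩
            · have h5 : s / lam * lam + s % lam < ℓ*r := by rw [heqs]; exact hs.1
              set X := s / lam * lam with hXd
              set L := ℓ * r with hLd
              omega
            · rw [heqs]; exact hs.2
          · show s / lam * lam + s % lam = s
            rw [mul_comm]; exact hdm
      rw [hbij, mul_comm]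
      exact countMod r ℓ i.val i.isLt
    rw [hhigh, hlow']
    exact hk
  · -- packing property
    intro T hT
    have hcount : (Multiset.map blk Finset.univ.val).countP (fun b => T ⊆ b)
        = (Finset.univ.filter (fun i : Fin ℓ => T ⊆ blk i)).card := by
      rw [Multiset.countP_map]
      rfl
    rw [hcount]
    by_contra hc
    push_neg at hc
    obtain ⟨A, hAsub, hAcard⟩ := Finset.exists_subset_card_eq
      (show lam + 1 ≤ (Finset.univ.filter (fun i : Fin ℓ => T ⊆ blk i)).card from hc)
    have hAg : ∀ x ∈ T, A ⊆ gnat x.val := by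
      intro x hx i hiA
      have hiI := hAsub hiA
      rw [Finset.mem_filter] at hiI
      have hxblk := hiI.2 hx
      rw [hblkdef, Finset.mem_filter] at hxblk
      exact hxblk.2
    have hHigh : ∀ x ∈ T, x.val < q*N ∧ eSet (x.val % N) = A := by
      intro x hx
      by_cases hxh : x.val < q*N
      · refine ⟨hxh, ?_⟩
        have hg : gnat x.val = eSet (x.val % N) := by rw [hgdef]; exact if_pos hxh
        have hsub : A ⊆ eSet (x.val % N) := by rw [← hg]; exact hAg x hx
        have hcard : (eSet (x.val % N)).card = lam + 1 :=
          heCard _ (Nat.mod_lt _ hNpos)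
        exact (Finset.eq_of_subset_of_card_le hsub (by omega)).symm
      · exfalso
        have hg : gnat x.val = W (x.val - q*N) := by rw [hgdef]; exact if_neg hxh
        have hsub : A ⊆ W (x.val - q*N) := by rw [← hg]; exact hAg x hx
        have := Finset.card_le_card hsub
        have := hWcard (x.val - q*N)
        omega
    have hTne : T.Nonempty := Finset.card_pos.mp (by omega)
    obtain ⟨x0, hx0⟩ := hTne
    set i0 := x0.val % N with hi0
    have hi0N : i0 < N := Nat.mod_lt _ hNpos
    have hsame : ∀ x ∈ T, x.val % N = i0 := by
      intro x hx
      apply heInj _ _ (Nat.mod_lt _ hNpos) hi0N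
      rw [(hHigh x hx).2, ← (hHigh x0 hx0).2]
    have hTq : T.card ≤ q := by
      have := countMod q N i0 hi0N
      rw [← this]
      apply Finset.card_le_card_of_injOn (fun x => x.val)
      · intro x hx
        simp only [Finset.mem_coe, Finset.mem_filter, Finset.mem_range]
        exact ⟨(hHigh x hx).1, hsame x hx⟩
      · exact Fin.val_injective.injOn
    omega
  · -- cardinality
    rw [Multiset.card_map]
    have : Multiset.card (Finset.univ.val : Multiset (Fin ℓ)) = Finset.univ.card := rfl
    rw [this, Finset.card_univ, Fintype.card_fin]

theorem stmt12 (v k t lam ℓ : ℕ) (ht : 2 ≤ t) (htk : t ≤ k) (hlam : 1 ≤ lam)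
    (hl1 : k < (t - 1) * ℓ.choose lam)
    (hl2 : ∀ m < ℓ, (t - 1) * m.choose lam ≤ k)
    (h1 : (ℓ * k : ℤ) - (t - 1) * (ℓ.choose (lam + 1)) ≤ lam * v)
    (h2 : ((lam : ℤ) + 2) * lam * v
        < (lam + 1) * (ℓ + 1) * k - (t - 1) * ((ℓ + 1).choose (lam + 1))) :
    PDN v k t lam = ℓ := by
  -- basic facts
  have hll : lam + 1 ≤ ℓ := by
    by_contra hcon
    push_neg at hcon
    rcases Nat.lt_or_ge ℓ lam with h | h
    · rw [Nat.choose_eq_zero_of_lt h] at hl1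
      omega
    · have heq : ℓ = lam := by omega
      subst heq
      rw [Nat.choose_self] at hl1
      omega
  have hℓ1 : 1 ≤ ℓ := by omega
  set N := ℓ.choose (lam+1) with hNdef
  set C' := (ℓ-1).choose lam with hC'def
  have hNpos : 0 < N := Nat.choose_pos hll
  have hC'k : (t-1) * C' ≤ k := hl2 (ℓ-1) (by omega)
  have hid : ℓ * C' = N * (lam+1) := by
    have h := Nat.add_one_mul_choose_eq (ℓ-1) lam
    have hsucc : (ℓ-1) + 1 = ℓ := by omega
    rw [hC'def, hNdef, ← hsucc]
    exact_mod_cast h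
  have htZ : ((t:ℤ) - 1) = ((t - 1 : ℕ) : ℤ) := by
    rw [Nat.cast_sub (by omega : 1 ≤ t)]; simp
  -- a ≥ 1
  have hCge : ((lam:ℕ)+2) ≤ (ℓ+1).choose (lam+1) := by
    calc lam+2 = (lam+2).choose (lam+1) := (Nat.choose_succ_self_right (lam+1)).symm
      _ ≤ (ℓ+1).choose (lam+1) := Nat.choose_le_choose (lam+1) (by omega)
  have ha1 : lam * v + 1 ≤ ℓ * k := by
    have hCgeZ : ((lam:ℤ)+2) ≤ ((ℓ+1).choose (lam+1) : ℤ) := by exact_mod_cast hCge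
    have ht1 : (1:ℤ) ≤ (t:ℤ)-1 := by
      have : (2:ℤ) ≤ (t:ℤ) := by exact_mod_cast ht
      linarith
    have hprod : ((lam:ℤ)+2) ≤ ((t:ℤ)-1) * ((ℓ+1).choose (lam+1) : ℤ) := by
      calc ((lam:ℤ)+2) = 1 * ((lam:ℤ)+2) := by ring
        _ ≤ ((t:ℤ)-1) * ((ℓ+1).choose (lam+1) : ℤ) :=
          mul_le_mul ht1 hCgeZ (by positivity) (by linarith)
    have hmul : ((lam:ℤ)+1)*(ℓ+1)*k ≤ ((lam:ℤ)+2)*ℓ*k := by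
      have hfac : ((lam:ℤ)+1)*(ℓ+1) ≤ ((lam:ℤ)+2)*ℓ := by
        have : ((lam:ℤ)+1) ≤ (ℓ:ℤ) := by exact_mod_cast hll
        nlinarith
      have hk0 : (0:ℤ) ≤ k := by positivity
      exact mul_le_mul_of_nonneg_right hfac hk0
    have key : ((lam:ℤ)+2)*((lam:ℤ)*v+1) ≤ ((lam:ℤ)+2)*((ℓ:ℤ)*k) := by nlinarith
    have hZ : (lam:ℤ)*v + 1 ≤ (ℓ:ℤ)*k :=
      le_of_mul_le_mul_left key (by positivity)
    exact_mod_cast hZ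
  set a := ℓ*k - lam*v with hadef
  have ha : 1 ≤ a := by omega
  have haN : a ≤ (t-1)*N := by
    rw [htZ] at h1
    have : (ℓ*k : ℤ) ≤ (lam:ℤ)*v + ((t-1:ℕ):ℤ)*N := by push_cast; push_cast at h1; linarith
    have hNle : ℓ*k ≤ lam*v + (t-1)*N := by exact_mod_cast this
    omega
  -- define q
  set q := (a-1)/N + 1 with hqdef
  have hd := Nat.div_add_mod (a-1) N
  have hm := Nat.mod_lt (a-1) hNpos
  have hqNeq : q*N = N*((a-1)/N) + N := by rw [hqdef]; ring
  have hqN : a ≤ q*N := by omega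
  have hdivlt : (a-1)/N < t-1 := by
    rw [Nat.div_lt_iff_lt_mul hNpos]
    have h1t : 1 ≤ t-1 := by
      by_contra hcc
      push_neg at hcc
      interval_cases ht1 : (t-1) <;> omega
    calc a - 1 < a := by omega
      _ ≤ (t-1)*N := haN
  have hqt : q ≤ t-1 := by omega
  have hqC' : q * C' ≤ k := by
    calc q * C' ≤ (t-1) * C' := Nat.mul_le_mul_right C' hqt
      _ ≤ k := hC'k
  set r := k - q*C' with hrdef
  have hkr : q*C' + r = k := by omega
  -- integer reasoning for v ≥ qN and ℓ r ≤ lam m'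
  have hstar : ℓ*k ≤ lam*v + q*N := by omega
  clear_value a q r
  clear hd hm hqNeq hdivlt hqdef hadef hrdef
  have hZ3 : (lam:ℤ)*v - (lam:ℤ)*(q*N) ≥ (ℓ:ℤ)*r := by
    have hc1 : ((ℓ*k:ℕ):ℤ) ≤ ((lam*v + q*N : ℕ):ℤ) := by exact_mod_cast hstar
    have hc2 : ((r:ℕ):ℤ) = (k:ℤ) - (q:ℤ)*C' := by
      have : ((q*C' + r : ℕ):ℤ) = (k:ℤ) := by exact_mod_cast hkr
      push_cast at this
      linarith
    have hc3 : ((ℓ:ℤ))*((q:ℤ)*C') = (q:ℤ)*((N:ℤ)*((lam:ℤ)+1)) := by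
      have hh : ((ℓ:ℤ))*(C':ℤ) = (N:ℤ)*((lam:ℤ)+1) := by exact_mod_cast hid
      calc ((ℓ:ℤ))*((q:ℤ)*C') = (q:ℤ)*(((ℓ:ℤ))*(C':ℤ)) := by ring
        _ = (q:ℤ)*((N:ℤ)*((lam:ℤ)+1)) := by rw [hh]
    push_cast at hc1
    rw [hc2]
    have hexp : (ℓ:ℤ)*((k:ℤ) - (q:ℤ)*(C':ℤ)) = (ℓ:ℤ)*(k:ℤ) - (q:ℤ)*((N:ℤ)*((lam:ℤ)+1)) := by
      rw [← hc3]; ring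
    rw [hexp]
    have heq2 : (q:ℤ)*((N:ℤ)*((lam:ℤ)+1)) = (lam:ℤ)*((q:ℤ)*(N:ℤ)) + (q:ℤ)*(N:ℤ) := by ring
    have hgoalpre : (lam:ℤ)*((q:ℤ)*(N:ℤ)) = (lam:ℤ)*(((q*N:ℕ)):ℤ) := by push_cast; ring
    linarith
  have hr0 : (0:ℤ) ≤ (ℓ:ℤ)*r := by positivity
  have hlam1Z : (1:ℤ) ≤ (lam:ℤ) := by exact_mod_cast hlam
  have hvqN : q*N ≤ v := by
    have : (lam:ℤ)*(q*N) ≤ (lam:ℤ)*v := by linarith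
    have h4 : ((q*N : ℕ):ℤ) ≤ (v:ℤ) := by
      have := le_of_mul_le_mul_left this (by linarith : (0:ℤ) < (lam:ℤ))
      exact_mod_cast this
    exact_mod_cast h4
  set m' := v - q*N with hm'def
  have hvm : q*N + m' = v := by omega
  clear_value m'
  clear hm'def
  have hlow : ℓ * r ≤ lam * m' := by
    have hc : ((m' : ℕ):ℤ) = (v:ℤ) - (q:ℤ)*(N:ℤ) := by
      have : ((q*N + m' : ℕ):ℤ) = (v:ℤ) := by exact_mod_cast hvm
      push_cast at this
      linarith
    have hZ5 : (ℓ:ℤ)*r ≤ (lam:ℤ)*m' := by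
      rw [hc]
      have : (lam:ℤ)*((v:ℤ) - (q:ℤ)*(N:ℤ)) = (lam:ℤ)*v - (lam:ℤ)*((q:ℤ)*(N:ℤ)) := by ring
      rw [this]
      have hcast2 : (lam:ℤ)*(((q*N:ℕ)):ℤ) = (lam:ℤ)*((q:ℤ)*(N:ℤ)) := by push_cast; ring
      linarith [hZ3]
    exact_mod_cast hZ5
  -- construction
  obtain ⟨B0, hB0, hB0card⟩ := pd_construct v k t lam ℓ q r m' ht hlam hll hqt hvm hkr hlow
  -- conclude
  have hub : ∀ n ∈ {n | ∃ B : Multiset (Finset (Fin v)), IsPD v k t lam B ∧ Multiset.card B = n},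
      n ≤ ℓ := by
    rintro n ⟨B, hB, rfl⟩
    exact pd_card_le v k t lam ℓ ht h2 B hB
  have hmem : ℓ ∈ {n | ∃ B : Multiset (Finset (Fin v)), IsPD v k t lam B ∧ Multiset.card B = n} :=
    ⟨B0, hB0, hB0card⟩
  apply le_antisymm
  · exact csSup_le ⟨ℓ, hmem⟩ hub
  · exact le_csSup ⟨ℓ, hub⟩ hmem
end

section
/- Let (V, B) be a 2-fold packing design PD_2(v) with n blocks (blocks may have arbitrary sizes, including empty and repeated blocks) such that every point of V lies in at most 3 blocks. Then each block B of B can be ordered into a sequence T_B (a permutation of B) so that every ordered pair of distinct points of V appears as a subsequence of at most one of the sequences T_B. -/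
open scoped Classical
local infixl:50 " <+ " => List.Sublist
namespace Stmt14Aux


variable {α : Type*}

lemma insertIdx_eq (x : α) : ∀ (p : ℕ) (l : List α), p ≤ l.length →
    l.insertIdx p x = l.take p ++ x :: l.drop p
  | 0, l, _ => by simp
  | (p+1), [], h => by simp at h
  | (p+1), a :: t, h => by
    simp only [List.insertIdx_succ_cons, List.take_succ_cons, List.drop_succ_cons,
      List.cons_append, List.cons.injEq, true_and]
    exact insertIdx_eq x p t (by simpa using h)

lemma not_both_sublist {l : List α} (h : l.Nodup) {y z : α} (hyz : y ≠ z) :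
    ¬([y, z] <+ l ∧ [z, y] <+ l) := by
  induction l with
  | nil => rintro ⟨h1, -⟩; simp at h1
  | cons a t ih =>
    rintro ⟨h1, h2⟩
    rw [List.nodup_cons] at h
    rcases List.sublist_cons_iff.1 h1 with h1' | ⟨r1, hr1, hr1'⟩ <;>
      rcases List.sublist_cons_iff.1 h2 with h2' | ⟨r2, hr2, hr2'⟩
    · exact ih h.2 ⟨h1', h2'⟩
    · -- a = z, r2 = [y]; z ∈ t from h1'
      have : z ∈ t := h1'.subset (by simp)
      cases hr2; exact h.1 this
    · have : y ∈ t := h2'.subset (by simp)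
      cases hr1; exact h.1 this
    · cases hr1; cases hr2; exact hyz rfl

lemma pair_sublist_take_drop {l : List α} {p : ℕ} {y z : α}
    (hy : y ∈ l.take p) (hz : z ∈ l.drop p) : [y, z] <+ l := by
  have := List.Sublist.append (List.singleton_sublist.2 hy) (List.singleton_sublist.2 hz)
  simpa [List.take_append_drop] using this

lemma sublist_remove {s t1 t2 : List α} {x : α} (hx : x ∉ s)
    (h : s <+ t1 ++ x :: t2) : s <+ t1 ++ t2 := by
  rcases List.sublist_append_iff.1 h with ⟨s1, s2, rfl, hs1, hs2⟩
  rcases List.sublist_cons_iff.1 hs2 with hs2' | ⟨r, rfl, hr⟩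
  · exact List.Sublist.append hs1 hs2'
  · exact absurd (by simp) hx

lemma pair_x_right {l : List α} {p : ℕ} {x y : α} (hx : x ∉ l) (hxy : y ≠ x) :
    [x, y] <+ (l.take p ++ x :: l.drop p) ↔ y ∈ l.drop p := by
  constructor
  · intro h
    rcases List.sublist_append_iff.1 h with ⟨s1, s2, hsplit, hs1, hs2⟩
    have hxl1 : x ∉ l.take p := fun hm => hx (List.take_subset _ _ hm)
    match s1, s2, hsplit with
    | [], s2, hsplit =>
      simp at hsplit; subst hsplit
      rcases List.sublist_cons_iff.1 hs2 with h' | ⟨r, hr, hr'⟩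
      · exact absurd (h'.subset (by simp)) (fun hm => hx (List.drop_subset _ _ hm))
      · cases hr
        exact hr'.subset (by simp)
    | [a], s2, hsplit =>
      obtain ⟨rfl, -⟩ : x = a ∧ [y] = s2 := by simpa using hsplit
      exact absurd (hs1.subset (by simp)) hxl1
    | (a :: b :: s1), s2, hsplit =>
      obtain ⟨rfl, -, -, -⟩ : x = a ∧ y = b ∧ s1 = [] ∧ s2 = [] := by simpa using hsplit
      exact absurd (hs1.subset (by simp)) hxl1
  · intro hy
    calc [x, y] <+ x :: l.drop p := by
          exact List.Sublist.cons₂ x (List.singleton_sublist.2 hy)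
      _ <+ l.take p ++ x :: l.drop p := List.sublist_append_right _ _

lemma pair_x_left {l : List α} {p : ℕ} {x y : α} (hx : x ∉ l) (hxy : y ≠ x) :
    [y, x] <+ (l.take p ++ x :: l.drop p) ↔ y ∈ l.take p := by
  constructor
  · intro h
    rcases List.sublist_append_iff.1 h with ⟨s1, s2, hsplit, hs1, hs2⟩
    match s1, s2, hsplit with
    | [], s2, hsplit =>
      simp at hsplit; subst hsplit
      rcases List.sublist_cons_iff.1 hs2 with h' | ⟨r, hr, hr'⟩
      · exact absurd (h'.subset (by simp)) (fun hm => hx (List.drop_subset _ _ hm))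
      · cases hr; exact absurd rfl hxy
    | [a], s2, hsplit =>
      obtain ⟨rfl, -⟩ : y = a ∧ [x] = s2 := by simpa using hsplit
      exact hs1.subset (by simp)
    | (a :: b :: s1), s2, hsplit =>
      obtain ⟨rfl, rfl, -, -⟩ : y = a ∧ x = b ∧ s1 = [] ∧ s2 = [] := by simpa using hsplit
      exact absurd (hs1.subset (by simp)) (fun hm => hx (List.take_subset _ _ hm))
  · intro hy
    have h1 : [y] <+ l.take p := List.singleton_sublist.2 hy
    have h2 : [x] <+ x :: l.drop p := by simp
    simpa using List.Sublist.append h1 h2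



/-- Discrete intermediate value theorem. -/
lemma ivt (g : ℕ → ℕ) (a b k : ℕ) (hab : a ≤ b) (ha : g a ≤ k) (hb : k ≤ g b)
    (hstep : ∀ t, a ≤ t → t < b → g (t + 1) ≤ g t + 1) :
    ∃ t, a ≤ t ∧ t ≤ b ∧ g t = k := by
  induction b with
  | zero =>
    have : a = 0 := by omega
    subst this
    exact ⟨0, le_rfl, le_rfl, by omega⟩
  | succ b ih =>
    rcases Nat.lt_or_ge a (b + 1) with hab' | hab'
    · have hab2 : a ≤ b := by omega
      rcases le_or_gt k (g b) with hk | hk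
      · obtain ⟨t, h1, h2, h3⟩ := ih hab2 hk (fun t h1 h2 => hstep t h1 (by omega))
        exact ⟨t, h1, by omega, h3⟩
      · have := hstep b hab2 (by omega)
        exact ⟨b + 1, by omega, le_rfl, by omega⟩
    · have : a = b + 1 := by omega
      subst this
      exact ⟨b + 1, le_rfl, le_rfl, by omega⟩

def IsPath (a c : ℕ → ℕ) (T n m : ℕ) : Prop :=
  a 0 = 0 ∧ c 0 = 0 ∧ a T = n ∧ c T = m ∧
  ∀ t < T, a t ≤ a (t + 1) ∧ c t ≤ c (t + 1) ∧ a (t + 1) + c (t + 1) ≤ a t + c t + 1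

lemma IsPath.monoA {a c : ℕ → ℕ} {T n m : ℕ} (h : IsPath a c T n m) :
    ∀ s t, s ≤ t → t ≤ T → a s ≤ a t := by
  intro s t hst
  induction t, hst using Nat.le_induction with
  | base => intro; exact le_rfl
  | succ t hst ih =>
    intro htT
    exact le_trans (ih (by omega)) (h.2.2.2.2 t (by omega)).1

lemma IsPath.monoC {a c : ℕ → ℕ} {T n m : ℕ} (h : IsPath a c T n m) :
    ∀ s t, s ≤ t → t ≤ T → c s ≤ c t := by
  intro s t hst
  induction t, hst using Nat.le_induction with
  | base => intro; exact le_rfl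
  | succ t hst ih =>
    intro htT
    exact le_trans (ih (by omega)) (h.2.2.2.2 t (by omega)).2.1

lemma IsPath.boundA {a c : ℕ → ℕ} {T n m : ℕ} (h : IsPath a c T n m) {t : ℕ} (ht : t ≤ T) :
    a t ≤ n := h.2.2.1 ▸ h.monoA t T ht le_rfl

lemma IsPath.boundC {a c : ℕ → ℕ} {T n m : ℕ} (h : IsPath a c T n m) {t : ℕ} (ht : t ≤ T) :
    c t ≤ m := h.2.2.2.1 ▸ h.monoC t T ht le_rfl

/-- Interval structure of the level sets of the first coordinate of a path. -/
lemma path_facts {a c : ℕ → ℕ} {T n m : ℕ} (hp : IsPath a c T n m) :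
    ∃ lo hi : ℕ → ℕ,
      c (lo 0) = 0 ∧ hi n = T ∧
      (∀ k ≤ n, c (lo k) ≤ c (hi k)) ∧
      (∀ k ≤ n, c (hi k) ≤ m) ∧
      (∀ k < n, c (lo (k + 1)) = c (hi k)) ∧
      (∀ k ≤ n, ∀ cv, c (lo k) ≤ cv → cv ≤ c (hi k) →
        ∃ t ≤ T, a t = k ∧ c t = cv) := by
  have ha0 : a 0 = 0 := hp.1
  have hc0 : c 0 = 0 := hp.2.1
  have haT : a T = n := hp.2.2.1
  have hcT : c T = m := hp.2.2.2.1
  have hstep := hp.2.2.2.2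
  have hex : ∀ k ≤ n, ∃ t, t ≤ T ∧ a t = k := by
    intro k hk
    obtain ⟨t, -, h2, h3⟩ := ivt a 0 T k (Nat.zero_le T) (by omega) (by omega)
      (fun t _ ht => by have := hstep t ht; omega)
    exact ⟨t, h2, h3⟩
  have hloP : ∀ k ≤ n, a (sInf {t | a t = k}) = k := by
    intro k hk
    obtain ⟨t, ht1, ht2⟩ := hex k hk
    exact Nat.sInf_mem (⟨t, ht2⟩ : Set.Nonempty {t | a t = k})
  have hlo_min : ∀ (k t : ℕ), a t = k → sInf {t | a t = k} ≤ t := by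
    intro k t ht
    exact Nat.sInf_le ht
  have hloT : ∀ k ≤ n, sInf {t | a t = k} ≤ T := by
    intro k hk
    obtain ⟨t, ht1, ht2⟩ := hex k hk
    exact le_trans (hlo_min k t ht2) ht1
  have hhiP : ∀ k ≤ n, a (Nat.findGreatest (fun t => a t = k) T) = k := by
    intro k hk
    obtain ⟨t, ht1, ht2⟩ := hex k hk
    exact Nat.findGreatest_spec (P := fun t => a t = k) ht1 ht2
  have hhiT : ∀ k, Nat.findGreatest (fun t => a t = k) T ≤ T := fun k => Nat.findGreatest_le T
  have hhi_max : ∀ k t, Nat.findGreatest (fun t => a t = k) T < t → t ≤ T → a t ≠ k := by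
    intro k t h1 h2
    exact Nat.findGreatest_is_greatest (P := fun t => a t = k) h1 h2
  have hlohi : ∀ k ≤ n, sInf {t | a t = k} ≤ Nat.findGreatest (fun t => a t = k) T := by
    intro k hk
    exact hlo_min k _ (hhiP k hk)
  refine ⟨fun k => sInf {t | a t = k}, fun k => Nat.findGreatest (fun t => a t = k) T,
    ?_, ?_, ?_, ?_, ?_, ?_⟩ <;> beta_reduce
  · have h0 : sInf {t | a t = 0} ≤ 0 := hlo_min 0 0 ha0
    have : sInf {t | a t = (0 : ℕ)} = 0 := by omega
    rw [this, hc0]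
  · have h1 : T ≤ Nat.findGreatest (fun t => a t = n) T := Nat.le_findGreatest le_rfl haT
    have h2 := hhiT n
    omega
  · intro k hk
    exact hp.monoC _ _ (hlohi k hk) (hhiT k)
  · intro k hk
    exact hp.boundC (hhiT k)
  · -- adjacency
    intro k hk
    have hk1 : k + 1 ≤ n := hk
    have hkn : k ≤ n := by omega
    have hhia := hhiP k hkn
    have hloa := hloP (k + 1) hk1
    have hloT1 := hloT (k + 1) hk1
    set r := Nat.findGreatest (fun t => a t = k) T with hrdef
    have hrT : r ≤ T := hhiT k
    have hlt : r < sInf {t | a t = k + 1} := by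
      by_contra hle
      push_neg at hle
      have := hp.monoA _ _ hle hrT
      omega
    have hrTlt : r < T := by omega
    have hs := hstep r hrTlt
    have hne : a (r + 1) ≠ k := hhi_max k (r + 1) (by omega) (by omega)
    have ha1 : a (r + 1) = k + 1 := by omega
    have hlo_le : sInf {t | a t = k + 1} ≤ r + 1 := hlo_min (k + 1) (r + 1) ha1
    have hloeq : sInf {t | a t = k + 1} = r + 1 := by omega
    rw [hloeq]
    omega
  · -- attainability
    intro k hk cv h1 h2
    set lo := sInf {t | a t = k} with hlodef
    set hi := Nat.findGreatest (fun t => a t = k) T with hhidef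
    have hstepc : ∀ t, lo ≤ t → t < hi → c (t + 1) ≤ c t + 1 := by
      intro t ht1 ht2
      have := hstep t (by have := hhiT k; omega)
      omega
    obtain ⟨t, ht1, ht2, ht3⟩ := ivt c lo hi cv (hlohi k hk) h1 h2 hstepc
    refine ⟨t, le_trans ht2 (hhiT k), ?_, ht3⟩
    have m1 := hp.monoA lo t ht1 (le_trans ht2 (hhiT k))
    have m2 := hp.monoA t hi ht2 (hhiT k)
    have hl : a lo = k := by rw [hlodef]; exact hloP k hk
    have hh : a hi = k := by rw [hhidef]; exact hhiP k hk
    omega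

/-- The main staircase lemma: three mutually constrained monotone lattice paths. -/
lemma staircase {n12 n13 n23 T1 T2 T3 : ℕ} {a1 b1 a2 c2 b3 c3 : ℕ → ℕ}
    (h1 : IsPath a1 b1 T1 n12 n13) (h2 : IsPath a2 c2 T2 n12 n23)
    (h3 : IsPath b3 c3 T3 n13 n23) :
    ∃ p1 p2 p3, p1 ≤ T1 ∧ p2 ≤ T2 ∧ p3 ≤ T3 ∧
      a1 p1 + a2 p2 = n12 ∧ b1 p1 + b3 p3 = n13 ∧ c2 p2 + c3 p3 = n23 := by
  obtain ⟨lo2, hi2, hc2lo0, hhi2n, hlh2, hbd2, hadj2, hatt2⟩ := path_facts h2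
  obtain ⟨lo3, hi3, hc3lo0, hhi3n, hlh3, hbd3, hadj3, hatt3⟩ := path_facts h3
  have hc2T : c2 T2 = n23 := h2.2.2.2.1
  have hc3T : c3 T3 = n23 := h3.2.2.2.1
  have ha1T : a1 T1 = n12 := h1.2.2.1
  have hb1T : b1 T1 = n13 := h1.2.2.2.1
  have ha10 : a1 0 = 0 := h1.1
  have hb10 : b1 0 = 0 := h1.2.1
  have hkle : ∀ p ≤ T1, n12 - a1 p ≤ n12 := by intro p hp; omega
  have hmle : ∀ p ≤ T1, n13 - b1 p ≤ n13 := by intro p hp; omega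
  -- the sliding bounds
  have hw0 : n23 ≤ c2 (hi2 (n12 - a1 0)) + c3 (hi3 (n13 - b1 0)) := by
    rw [ha10, hb10, Nat.sub_zero, Nat.sub_zero, hhi2n, hhi3n, hc2T, hc3T]
    omega
  have huT : c2 (lo2 (n12 - a1 T1)) + c3 (lo3 (n13 - b1 T1)) = 0 := by
    rw [ha1T, hb1T, Nat.sub_self, Nat.sub_self, hc2lo0, hc3lo0]
  have hchain : ∀ p < T1,
      c2 (lo2 (n12 - a1 p)) + c3 (lo3 (n13 - b1 p)) ≤
        c2 (hi2 (n12 - a1 (p+1))) + c3 (hi3 (n13 - b1 (p+1))) := by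
    intro p hp
    have hs := h1.2.2.2.2 p hp
    have hbA : a1 (p + 1) ≤ n12 := h1.boundA (show p + 1 ≤ T1 by omega)
    have hbApre : a1 p ≤ n12 := h1.boundA (le_of_lt hp)
    have hbB : b1 (p + 1) ≤ n13 := h1.boundC (show p + 1 ≤ T1 by omega)
    have hbBpre : b1 p ≤ n13 := h1.boundC (le_of_lt hp)
    have hcase : (a1 (p+1) = a1 p ∧ b1 (p+1) = b1 p) ∨
        (a1 (p+1) = a1 p + 1 ∧ b1 (p+1) = b1 p) ∨
        (a1 (p+1) = a1 p ∧ b1 (p+1) = b1 p + 1) := by omega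
    rcases hcase with ⟨hA, hB⟩ | ⟨hA, hB⟩ | ⟨hA, hB⟩
    · rw [hA, hB]
      have := hlh2 (n12 - a1 p) (hkle p (by omega))
      have := hlh3 (n13 - b1 p) (hmle p (by omega))
      omega
    · have hk' : n12 - a1 p = (n12 - a1 (p+1)) + 1 := by omega
      have hklt : n12 - a1 (p+1) < n12 := by omega
      have hadj := hadj2 (n12 - a1 (p+1)) hklt
      rw [hB, hk', hadj]
      have := hlh3 (n13 - b1 p) (hmle p (by omega))
      omega
    · have hm' : n13 - b1 p = (n13 - b1 (p+1)) + 1 := by omega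
      have hmlt : n13 - b1 (p+1) < n13 := by omega
      have hadj := hadj3 (n13 - b1 (p+1)) hmlt
      rw [hA, hm', hadj]
      have := hlh2 (n12 - a1 p) (hkle p (by omega))
      omega
  -- find p1 : the greatest p with n23 ≤ w p
  have hP1 : n23 ≤ c2 (hi2 (n12 - a1 (Nat.findGreatest
      (fun p => n23 ≤ c2 (hi2 (n12 - a1 p)) + c3 (hi3 (n13 - b1 p))) T1))) +
      c3 (hi3 (n13 - b1 (Nat.findGreatest
      (fun p => n23 ≤ c2 (hi2 (n12 - a1 p)) + c3 (hi3 (n13 - b1 p))) T1))) :=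
    Nat.findGreatest_spec
      (P := fun p => n23 ≤ c2 (hi2 (n12 - a1 p)) + c3 (hi3 (n13 - b1 p)))
      (Nat.zero_le T1) hw0
  set p1 : ℕ := Nat.findGreatest
      (fun p => n23 ≤ c2 (hi2 (n12 - a1 p)) + c3 (hi3 (n13 - b1 p))) T1 with hp1def
  have hp1T : p1 ≤ T1 := Nat.findGreatest_le T1
  have hu1 : c2 (lo2 (n12 - a1 p1)) + c3 (lo3 (n13 - b1 p1)) ≤ n23 := by
    rcases Nat.lt_or_ge p1 T1 with hlt | hge
    · have hnp : ¬ (n23 ≤ c2 (hi2 (n12 - a1 (p1+1))) + c3 (hi3 (n13 - b1 (p1+1)))) :=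
        Nat.findGreatest_is_greatest
          (P := fun p => n23 ≤ c2 (hi2 (n12 - a1 p)) + c3 (hi3 (n13 - b1 p)))
          (n := T1) (by omega) (by omega)
      have := hchain p1 hlt
      omega
    · have : p1 = T1 := by omega
      rw [this, huT]
      omega
  -- choose cv2 cv3
  have hkp1 : n12 - a1 p1 ≤ n12 := hkle p1 hp1T
  have hmp1 : n13 - b1 p1 ≤ n13 := hmle p1 hp1T
  have hl2 := hlh2 (n12 - a1 p1) hkp1
  have hl3 := hlh3 (n13 - b1 p1) hmp1
  have hb2 := hbd2 (n12 - a1 p1) hkp1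
  have hb3 := hbd3 (n13 - b1 p1) hmp1
  obtain ⟨cv2, cv3, hcv2a, hcv2b, hcv3a, hcv3b, hcvsum⟩ :
      ∃ cv2 cv3, c2 (lo2 (n12 - a1 p1)) ≤ cv2 ∧ cv2 ≤ c2 (hi2 (n12 - a1 p1)) ∧
        c3 (lo3 (n13 - b1 p1)) ≤ cv3 ∧ cv3 ≤ c3 (hi3 (n13 - b1 p1)) ∧ cv2 + cv3 = n23 := by
    refine ⟨max (c2 (lo2 (n12 - a1 p1))) (n23 - c3 (hi3 (n13 - b1 p1))),
      n23 - max (c2 (lo2 (n12 - a1 p1))) (n23 - c3 (hi3 (n13 - b1 p1))), ?_, ?_, ?_, ?_, ?_⟩ <;>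
      · rcases max_cases (c2 (lo2 (n12 - a1 p1))) (n23 - c3 (hi3 (n13 - b1 p1))) with
          ⟨hmx, -⟩ | ⟨hmx, -⟩ <;> rw [hmx] <;> omega
  obtain ⟨p2, hp2T, hp2a, hp2c⟩ := hatt2 (n12 - a1 p1) hkp1 cv2 hcv2a hcv2b
  obtain ⟨p3, hp3T, hp3a, hp3c⟩ := hatt3 (n13 - b1 p1) hmp1 cv3 hcv3a hcv3b
  refine ⟨p1, p2, p3, hp1T, hp2T, hp3T, ?_, ?_, ?_⟩
  · have : a1 p1 ≤ n12 := h1.boundA hp1T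
    omega
  · have : b1 p1 ≤ n13 := h1.boundC hp1T
    omega
  · omega

variable {α : Type*}

lemma countP_eq_filter_range [Inhabited α] (p : α → Bool) (l : List α) :
    l.countP p = ((List.range l.length).filter (fun i => p l[i]!)).length := by
  induction l with
  | nil => simp
  | cons a t ih =>
    rw [List.countP_cons, List.length_cons, List.range_succ_eq_map]
    simp only [List.filter_cons]
    have h0 : (a :: t)[0]! = a := by simp
    have hs : ∀ i : ℕ, (a :: t)[i + 1]! = t[i]! := by intro i; simp
    rw [h0]
    have hmap : (List.map Nat.succ (List.range t.length)).filter
        (fun i => p (a :: t)[i]!) = List.map Nat.succ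
        ((List.range t.length).filter (fun i => p t[i]!)) := by
      rw [List.filter_map]
      congr 1
    rw [hmap]
    by_cases hp : p a <;> simp [ih, hp]

lemma card_le_countP [Inhabited α] (l : List α) (p : α → Bool) (s : Finset ℕ)
    (h : ∀ i ∈ s, i < l.length ∧ p l[i]! = true) : s.card ≤ l.countP p := by
  rw [countP_eq_filter_range]
  have h2 : s ⊆ ((List.range l.length).filter (fun i => p l[i]!)).toFinset := by
    intro i hi
    rw [List.mem_toFinset, List.mem_filter, List.mem_range]
    exact ⟨(h i hi).1, (h i hi).2⟩
  calc s.card ≤ _ := Finset.card_le_card h2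
    _ ≤ _ := List.toFinset_card_le _

lemma countP_le_one [Inhabited α] (l : List α) (p : α → Bool)
    (h : ∀ i j, i < l.length → j < l.length → p l[i]! → p l[j]! → i = j) :
    l.countP p ≤ 1 := by
  rw [countP_eq_filter_range]
  set f := (List.range l.length).filter (fun i => p l[i]!) with hf
  have hnd : f.Nodup := List.Nodup.filter _ List.nodup_range
  have hmem : ∀ i ∈ f, i < l.length ∧ p l[i]! := by
    intro i hi
    rw [hf, List.mem_filter, List.mem_range] at hi
    exact ⟨hi.1, by simpa using hi.2⟩
  rcases f with _ | ⟨a, _ | ⟨b, r⟩⟩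
  · simp
  · simp
  · exfalso
    have ha := hmem a (by simp)
    have hb := hmem b (by simp)
    have : a = b := h a b ha.1 hb.1 ha.2 hb.2
    rw [List.nodup_cons] at hnd
    exact hnd.1 (by simp [this])

lemma countP_congr_two {β : Type*} [Inhabited α] [Inhabited β] {l1 : List α} {l2 : List β}
    (p : α → Bool) (q : β → Bool) (hlen : l1.length = l2.length)
    (h : ∀ i, i < l1.length → (p l1[i]! = q l2[i]!)) : l1.countP p = l2.countP q := by
  rw [countP_eq_filter_range, countP_eq_filter_range, ← hlen]
  congr 1
  apply List.filter_congr
  intro i hi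
  rw [List.mem_range] at hi
  exact h i hi

lemma countP_mem_eq_card [DecidableEq α] {S : Finset α} {l : List α} (h : l.Nodup) :
    l.countP (fun a => decide (a ∈ S)) = (S.filter (fun a => a ∈ l)).card := by
  rw [List.countP_eq_length_filter]
  have hnd : (l.filter (fun a => decide (a ∈ S))).Nodup := List.Nodup.filter _ h
  rw [← List.toFinset_card_of_nodup hnd]
  congr 1
  ext a
  simp [List.mem_filter, Finset.mem_filter, and_comm]

lemma coe_countP (p : α → Prop) [DecidablePred p] (l : List α) :
    (l : Multiset α).countP p = l.countP (fun a => decide (p a)) := by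
  simp

variable {α : Type*}


lemma mem_drop_iff_not_mem_take {l : List α} (h : l.Nodup) {p : ℕ} {y : α} (hy : y ∈ l) :
    y ∈ l.drop p ↔ y ∉ l.take p := by
  have hsplit : l.take p ++ l.drop p = l := List.take_append_drop p l
  have hnd : (l.take p ++ l.drop p).Nodup := by rw [hsplit]; exact h
  rw [List.nodup_append] at hnd
  have hmem : y ∈ l.take p ∨ y ∈ l.drop p := by
    rw [← List.mem_append, hsplit]; exact hy
  constructor
  · intro h1 h2
    exact hnd.2.2 y h2 y h1 rfl
  · intro h1
    tauto

/-- The complementary-prefix lemma. -/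
lemma comp_lemma [DecidableEq α] {L1 L2 : List α} {S : Finset α} {p1 p2 : ℕ}
    (h1 : L1.Nodup) (h2 : L2.Nodup)
    (hS1 : ∀ y ∈ S, y ∈ L1) (hS2 : ∀ y ∈ S, y ∈ L2)
    (hrev : ∀ y z, y ∈ S → z ∈ S → y ≠ z → ¬([y, z] <+ L1 ∧ [y, z] <+ L2))
    (hcount : (L1.take p1).countP (fun a => decide (a ∈ S)) +
      (L2.take p2).countP (fun a => decide (a ∈ S)) = S.card) :
    ∀ y ∈ S, (y ∈ L1.drop p1 ↔ y ∉ L2.drop p2) := by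
  have hnd1 : (L1.take p1).Nodup := List.Nodup.sublist (List.take_sublist _ _) h1
  have hnd2 : (L2.take p2).Nodup := List.Nodup.sublist (List.take_sublist _ _) h2
  set A : Finset α := S.filter (fun a => a ∈ L1.take p1) with hA
  set Bf : Finset α := S.filter (fun a => a ∈ L2.take p2) with hB
  have hcA : (L1.take p1).countP (fun a => decide (a ∈ S)) = A.card := countP_mem_eq_card hnd1
  have hcB : (L2.take p2).countP (fun a => decide (a ∈ S)) = Bf.card := countP_mem_eq_card hnd2
  rw [hcA, hcB] at hcount
  have hsum : A.card + Bf.card = S.card := hcount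
  have hAS : A ⊆ S := Finset.filter_subset _ _
  have hBS : Bf ⊆ S := Finset.filter_subset _ _
  intro y hyS
  have hy1 : y ∈ L1 := hS1 y hyS
  have hy2 : y ∈ L2 := hS2 y hyS
  rw [mem_drop_iff_not_mem_take h1 hy1, mem_drop_iff_not_mem_take h2 hy2]
  have hyA : y ∈ A ↔ y ∈ L1.take p1 := by simp [hA, hyS]
  have hyB : y ∈ Bf ↔ y ∈ L2.take p2 := by simp [hB, hyS]
  rw [← hyA, ← hyB]
  -- not both in A and B
  have hnotboth : ¬(y ∈ A ∧ y ∈ Bf) := by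
    rintro ⟨hyA', hyB'⟩
    have hinter : 1 ≤ (A ∩ Bf).card := by
      refine Finset.card_pos.2 ⟨y, ?_⟩
      exact Finset.mem_inter.2 ⟨hyA', hyB'⟩
    have hunion : A ∪ Bf ⊆ S := Finset.union_subset hAS hBS
    have hcard : (A ∪ Bf).card + (A ∩ Bf).card = A.card + Bf.card :=
      Finset.card_union_add_card_inter A Bf
    have hlt : (A ∪ Bf).card < S.card := by omega
    obtain ⟨z, hzS, hz⟩ := Finset.exists_of_ssubset
      (HasSubset.Subset.ssubset_of_ne hunion (by intro h; rw [h] at hlt; omega))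
    have hzA : z ∉ A := fun hh => hz (Finset.mem_union_left _ hh)
    have hzB : z ∉ Bf := fun hh => hz (Finset.mem_union_right _ hh)
    have hzy : y ≠ z := by rintro rfl; exact hzA hyA'
    have hz1 : z ∈ L1.drop p1 := by
      rw [mem_drop_iff_not_mem_take h1 (hS1 z hzS)]
      intro hm
      exact hzA (by simp [hA, hzS, hm])
    have hz2 : z ∈ L2.drop p2 := by
      rw [mem_drop_iff_not_mem_take h2 (hS2 z hzS)]
      intro hm
      exact hzB (by simp [hB, hzS, hm])
    exact hrev y z hyS hzS hzy
      ⟨pair_sublist_take_drop (hyA.1 hyA') hz1, pair_sublist_take_drop (hyB.1 hyB') hz2⟩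
  -- not both out
  have hnotneither : ¬(y ∉ A ∧ y ∉ Bf) := by
    rintro ⟨hyA', hyB'⟩
    have hAy : A ⊆ S.erase y := fun z hz =>
      Finset.mem_erase.2 ⟨by rintro rfl; exact hyA' hz, hAS hz⟩
    have hBy : Bf ⊆ S.erase y := fun z hz =>
      Finset.mem_erase.2 ⟨by rintro rfl; exact hyB' hz, hBS hz⟩
    have hunion : A ∪ Bf ⊆ S.erase y := Finset.union_subset hAy hBy
    have hue : (A ∪ Bf).card ≤ S.card - 1 := by
      have := Finset.card_le_card hunion
      have := Finset.card_erase_of_mem hyS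
      omega
    have hcard : (A ∪ Bf).card + (A ∩ Bf).card = A.card + Bf.card :=
      Finset.card_union_add_card_inter A Bf
    have hScard : 1 ≤ S.card := Finset.card_pos.2 ⟨y, hyS⟩
    have : 1 ≤ (A ∩ Bf).card := by omega
    obtain ⟨z, hz⟩ := (Finset.card_pos (s := A ∩ Bf)).1 (by omega)
    have hzA : z ∈ A := (Finset.mem_inter.1 hz).1
    have hzB : z ∈ Bf := (Finset.mem_inter.1 hz).2
    have hzS : z ∈ S := hAS hzA
    have hzy : z ≠ y := by rintro rfl; exact hyA' hzA
    have hy1' : y ∈ L1.drop p1 := by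
      rw [mem_drop_iff_not_mem_take h1 hy1]
      exact fun hm => hyA' (hyA.2 hm)
    have hy2' : y ∈ L2.drop p2 := by
      rw [mem_drop_iff_not_mem_take h2 hy2]
      exact fun hm => hyB' (hyB.2 hm)
    exact hrev z y hzS hyS hzy
      ⟨pair_sublist_take_drop ((by simpa [hA] using hzA : z ∈ S ∧ z ∈ L1.take p1)).2 hy1',
       pair_sublist_take_drop ((by simpa [hB] using hzB : z ∈ S ∧ z ∈ L2.take p2)).2 hy2'⟩
  tauto

/-- Counting prefixes of a nodup list builds a lattice path. -/
lemma isPath_count {α : Type*} [DecidableEq α] {L : List α} {S S' : Finset α}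
    (hnd : L.Nodup) (hS : ∀ a ∈ S, a ∈ L) (hS' : ∀ a ∈ S', a ∈ L)
    (hdisj : ∀ a, a ∈ S → a ∈ S' → False) :
    IsPath (fun p => (L.take p).countP (fun a => decide (a ∈ S)))
      (fun p => (L.take p).countP (fun a => decide (a ∈ S'))) L.length S.card S'.card := by
  refine ⟨by simp, by simp, ?_, ?_, ?_⟩ <;> beta_reduce
  · rw [List.take_length, countP_mem_eq_card hnd]
    rw [Finset.filter_true_of_mem hS]
  · rw [List.take_length, countP_mem_eq_card hnd]
    rw [Finset.filter_true_of_mem hS']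
  · intro t ht
    have hts : L.take (t + 1) = L.take t ++ [L[t]] := by
      rw [List.take_succ]
      congr
      rw [List.getElem?_eq_getElem ht]
      rfl
    rw [hts, List.countP_append, List.countP_append]
    by_cases h1 : L[t] ∈ S <;> by_cases h2 : L[t] ∈ S'
    · exact (hdisj _ h1 h2).elim
    all_goals (simp [h1, h2]; try omega)

lemma expos {β : Type*} [DecidableEq β] (x : β) (B : List (Finset β)) (T' : List (List β))
    (hlen : T'.length = B.length)
    (hFn : ∀ i, i < B.length → (T'[i]!).Nodup ∧ (T'[i]!).toFinset = (B[i]!).erase x)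
    (hpairx : ∀ y : β, y ≠ x → (B.countP (fun b => decide (x ∈ b ∧ y ∈ b)) ≤ 2))
    (hfreqx : B.countP (fun b => decide (x ∈ b)) ≤ 3)
    (hIH : ∀ y z : β, y ≠ z → (T'.countP (fun L => decide ([y, z] <+ L)) ≤ 1)) :
    ∃ pos : ℕ → ℕ,
      (∀ i, i < B.length → x ∈ B[i]! → pos i ≤ (T'[i]!).length) ∧
      (∀ i j, i < B.length → j < B.length → i ≠ j → x ∈ B[i]! → x ∈ B[j]! →
        ∀ y, y ∈ (B[i]!).erase x → y ∈ (B[j]!).erase x →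
          (y ∈ (T'[i]!).drop (pos i) ↔ y ∉ (T'[j]!).drop (pos j))) := by
  have hcnt : B.countP (fun b => decide (x ∈ b)) =
      ((List.range B.length).filter (fun i => decide (x ∈ B[i]!))).length :=
    countP_eq_filter_range _ B
  set idxs := (List.range B.length).filter (fun i => decide (x ∈ B[i]!)) with hidxs
  have hlenidxs : idxs.length ≤ 3 := by omega
  have hmemidx : ∀ i, i ∈ idxs ↔ (i < B.length ∧ x ∈ B[i]!) := by
    intro i
    rw [hidxs, List.mem_filter, List.mem_range]
    simp
  have hnd : idxs.Nodup := List.Nodup.filter _ List.nodup_range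
  -- helper : two lists with same ordered pair
  have hrev2 : ∀ a b, a < B.length → b < B.length → a ≠ b →
      ∀ y z : β, y ≠ z → ¬([y, z] <+ T'[a]! ∧ [y, z] <+ T'[b]!) := by
    rintro a b ha hb hab y z hyz ⟨hs1, hs2⟩
    have h2 : 2 ≤ T'.countP (fun L => decide ([y, z] <+ L)) := by
      have := card_le_countP T' (fun L => decide ([y, z] <+ L)) {a, b} ?_
      · simpa [Finset.card_insert_of_notMem, hab] using this
      · intro t ht
        simp only [Finset.mem_insert, Finset.mem_singleton] at ht
        rcases ht with rfl | rfl
        · exact ⟨by omega, by simpa using hs1⟩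
        · exact ⟨by omega, by simpa using hs2⟩
    have := hIH y z hyz
    omega
  rcases hL : idxs with - | ⟨i, rest1⟩
  · -- no block contains x
    refine ⟨fun _ => 0, ?_, ?_⟩
    · intro i hi hxi
      have : i ∈ idxs := (hmemidx i).2 ⟨hi, hxi⟩
      rw [hL] at this; simp at this
    · intro i j hi hj hij hxi hxj
      have : i ∈ idxs := (hmemidx i).2 ⟨hi, hxi⟩
      rw [hL] at this; simp at this
  rcases rest1 with - | ⟨j, rest2⟩
  · -- exactly one block
    refine ⟨fun _ => 0, fun _ _ _ => Nat.zero_le _, ?_⟩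
    intro a b ha hb hab hxa hxb
    have h1 : a ∈ idxs := (hmemidx a).2 ⟨ha, hxa⟩
    have h2 : b ∈ idxs := (hmemidx b).2 ⟨hb, hxb⟩
    rw [hL] at h1 h2; simp at h1 h2
    exact absurd (h1.trans h2.symm) hab
  rcases rest2 with - | ⟨k, rest3⟩
  · -- exactly two blocks i j
    have hij : i ≠ j := by
      rw [hL] at hnd; simp [List.nodup_cons] at hnd; tauto
    have hiI : i ∈ idxs := by rw [hL]; simp
    have hjI : j ∈ idxs := by rw [hL]; simp
    have hi := (hmemidx i).1 hiI
    have hj := (hmemidx j).1 hjI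
    refine ⟨fun t => if t = i then 0 else (T'[t]!).length, ?_, ?_⟩
    · intro t ht hxt
      by_cases h : t = i <;> simp [h]
    · intro a b ha hb hab hxa hxb y hya hyb
      have h1 : a ∈ idxs := (hmemidx a).2 ⟨ha, hxa⟩
      have h2 : b ∈ idxs := (hmemidx b).2 ⟨hb, hxb⟩
      rw [hL] at h1 h2; simp at h1 h2
      have hmema : y ∈ T'[a]! := by
        rw [← List.mem_toFinset, (hFn a ha).2]; exact hya
      have hmemb : y ∈ T'[b]! := by
        rw [← List.mem_toFinset, (hFn b hb).2]; exact hyb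
      rcases h1 with rfl | rfl <;> rcases h2 with rfl | rfl
      · exact absurd rfl hab
      · beta_reduce
        rw [if_pos rfl, if_neg (Ne.symm hij)]
        simpa [List.drop_length, List.drop_zero] using hmema
      · beta_reduce
        rw [if_neg (fun h => hij h.symm), if_pos rfl]
        simpa [List.drop_length, List.drop_zero] using hmemb
      · exact absurd rfl hab
  · -- three blocks i j k
    have hrest : rest3 = [] := by
      rw [hL] at hlenidxs
      simp only [List.length_cons] at hlenidxs
      exact List.eq_nil_of_length_eq_zero (by omega)
    subst hrest
    have hndL : idxs.Nodup := hnd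
    rw [hL] at hndL
    simp only [List.nodup_cons, List.mem_cons, List.mem_singleton, List.not_mem_nil,
      or_false, List.nodup_nil, and_true] at hndL
    have hij : i ≠ j := fun h => hndL.1 (Or.inl h)
    have hik : i ≠ k := fun h => hndL.1 (Or.inr h)
    have hjk : j ≠ k := hndL.2.1
    have hiI : i ∈ idxs := by rw [hL]; simp
    have hjI : j ∈ idxs := by rw [hL]; simp
    have hkI : k ∈ idxs := by rw [hL]; simp
    obtain ⟨hi, hxi⟩ := (hmemidx i).1 hiI
    obtain ⟨hj, hxj⟩ := (hmemidx j).1 hjI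
    obtain ⟨hk, hxk⟩ := (hmemidx k).1 hkI
    obtain ⟨hndi, htfi⟩ := hFn i hi
    obtain ⟨hndj, htfj⟩ := hFn j hj
    obtain ⟨hndk, htfk⟩ := hFn k hk
    set Li := T'[i]! with hLi
    set Lj := T'[j]! with hLj
    set Lk := T'[k]! with hLk
    set bi := (B[i]!).erase x with hbi
    set bj := (B[j]!).erase x with hbj
    set bk := (B[k]!).erase x with hbk
    set Sij := bi ∩ bj with hSij
    set Sik := bi ∩ bk with hSik
    set Sjk := bj ∩ bk with hSjk
    have hmemi : ∀ a ∈ bi, a ∈ Li := by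
      intro a ha; rw [← List.mem_toFinset, htfi]; exact ha
    have hmemj : ∀ a ∈ bj, a ∈ Lj := by
      intro a ha; rw [← List.mem_toFinset, htfj]; exact ha
    have hmemk : ∀ a ∈ bk, a ∈ Lk := by
      intro a ha; rw [← List.mem_toFinset, htfk]; exact ha
    have h3disj : ∀ y, y ∈ bi → y ∈ bj → y ∈ bk → False := by
      intro y hyi hyj hyk
      have hyx : y ≠ x := (Finset.mem_erase.1 hyi).1
      have h3 : 3 ≤ B.countP (fun b => decide (x ∈ b ∧ y ∈ b)) := by
        have := card_le_countP B (fun b => decide (x ∈ b ∧ y ∈ b)) {i, j, k} ?_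
        · have hc : ({i, j, k} : Finset ℕ).card = 3 := by
            rw [Finset.card_insert_of_notMem (by simp [hij, hik]),
              Finset.card_insert_of_notMem (by simp [hjk])]
            simp
          omega
        · intro t ht
          simp only [Finset.mem_insert, Finset.mem_singleton] at ht
          rcases ht with rfl | rfl | rfl
          · exact ⟨by omega, by simpa using (And.intro hxi (Finset.mem_erase.1 hyi).2 : x ∈ B[t]! ∧ y ∈ B[t]!)⟩
          · exact ⟨by omega, by simpa using (And.intro hxj (Finset.mem_erase.1 hyj).2 : x ∈ B[t]! ∧ y ∈ B[t]!)⟩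
          · exact ⟨by omega, by simpa using (And.intro hxk (Finset.mem_erase.1 hyk).2 : x ∈ B[t]! ∧ y ∈ B[t]!)⟩
      have := hpairx y hyx
      omega
    have hp1 : IsPath (fun p => (Li.take p).countP (fun a => decide (a ∈ Sij)))
        (fun p => (Li.take p).countP (fun a => decide (a ∈ Sik))) Li.length Sij.card Sik.card :=
      isPath_count hndi (fun a ha => hmemi a (Finset.mem_inter.1 ha).1)
        (fun a ha => hmemi a (Finset.mem_inter.1 ha).1)
        (fun a h1 h2 => h3disj a (Finset.mem_inter.1 h1).1 (Finset.mem_inter.1 h1).2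
          (Finset.mem_inter.1 h2).2)
    have hp2 : IsPath (fun p => (Lj.take p).countP (fun a => decide (a ∈ Sij)))
        (fun p => (Lj.take p).countP (fun a => decide (a ∈ Sjk))) Lj.length Sij.card Sjk.card :=
      isPath_count hndj (fun a ha => hmemj a (Finset.mem_inter.1 ha).2)
        (fun a ha => hmemj a (Finset.mem_inter.1 ha).1)
        (fun a h1 h2 => h3disj a (Finset.mem_inter.1 h1).1 (Finset.mem_inter.1 h1).2
          (Finset.mem_inter.1 h2).2)
    have hp3 : IsPath (fun p => (Lk.take p).countP (fun a => decide (a ∈ Sik)))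
        (fun p => (Lk.take p).countP (fun a => decide (a ∈ Sjk))) Lk.length Sik.card Sjk.card :=
      isPath_count hndk (fun a ha => hmemk a (Finset.mem_inter.1 ha).2)
        (fun a ha => hmemk a (Finset.mem_inter.1 ha).2)
        (fun a h1 h2 => h3disj a (Finset.mem_inter.1 h1).1 (Finset.mem_inter.1 h2).1
          (Finset.mem_inter.1 h1).2)
    obtain ⟨p1, p2, p3, hp1T, hp2T, hp3T, heq12, heq13, heq23⟩ := staircase hp1 hp2 hp3
    have hcomp_ij : ∀ y ∈ Sij, (y ∈ Li.drop p1 ↔ y ∉ Lj.drop p2) :=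
      comp_lemma hndi hndj (fun a ha => hmemi a (Finset.mem_inter.1 ha).1)
        (fun a ha => hmemj a (Finset.mem_inter.1 ha).2)
        (fun y z hy hz hyz => hrev2 i j hi hj hij y z hyz) heq12
    have hcomp_ik : ∀ y ∈ Sik, (y ∈ Li.drop p1 ↔ y ∉ Lk.drop p3) :=
      comp_lemma hndi hndk (fun a ha => hmemi a (Finset.mem_inter.1 ha).1)
        (fun a ha => hmemk a (Finset.mem_inter.1 ha).2)
        (fun y z hy hz hyz => hrev2 i k hi hk hik y z hyz) heq13
    have hcomp_jk : ∀ y ∈ Sjk, (y ∈ Lj.drop p2 ↔ y ∉ Lk.drop p3) :=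
      comp_lemma hndj hndk (fun a ha => hmemj a (Finset.mem_inter.1 ha).1)
        (fun a ha => hmemk a (Finset.mem_inter.1 ha).2)
        (fun y z hy hz hyz => hrev2 j k hj hk hjk y z hyz) heq23
    refine ⟨fun t => if t = i then p1 else if t = j then p2 else if t = k then p3 else 0,
      ?_, ?_⟩
    · intro t ht hxt
      have : t ∈ idxs := (hmemidx t).2 ⟨ht, hxt⟩
      rw [hL] at this
      simp only [List.mem_cons, List.mem_singleton, List.not_mem_nil, or_false] at this
      rcases this with rfl | rfl | rfl
      · beta_reduce; rw [if_pos rfl]; exact hp1T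
      · beta_reduce; rw [if_neg (Ne.symm hij), if_pos rfl]; exact hp2T
      · beta_reduce; rw [if_neg (Ne.symm hik), if_neg (Ne.symm hjk), if_pos rfl]; exact hp3T
    · intro a b ha hb hab hxa hxb y hya hyb
      have h1 : a ∈ idxs := (hmemidx a).2 ⟨ha, hxa⟩
      have h2 : b ∈ idxs := (hmemidx b).2 ⟨hb, hxb⟩
      rw [hL] at h1 h2
      simp only [List.mem_cons, List.mem_singleton, List.not_mem_nil, or_false] at h1 h2
      rcases h1 with rfl | rfl | rfl <;> rcases h2 with rfl | rfl | rfl <;> beta_reduce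
      · exact absurd rfl hab
      · rw [if_pos rfl, if_neg (Ne.symm hij), if_pos rfl]
        exact hcomp_ij y (Finset.mem_inter.2 ⟨hya, hyb⟩)
      · rw [if_pos rfl, if_neg (Ne.symm hik), if_neg (Ne.symm hjk), if_pos rfl]
        exact hcomp_ik y (Finset.mem_inter.2 ⟨hya, hyb⟩)
      · rw [if_neg (Ne.symm hij), if_pos rfl, if_pos rfl]
        have := hcomp_ij y (Finset.mem_inter.2 ⟨hyb, hya⟩)
        tauto
      · exact absurd rfl hab
      · rw [if_neg (Ne.symm hij), if_pos rfl, if_neg (Ne.symm hik), if_neg (Ne.symm hjk),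
          if_pos rfl]
        exact hcomp_jk y (Finset.mem_inter.2 ⟨hya, hyb⟩)
      · rw [if_neg (Ne.symm hik), if_neg (Ne.symm hjk), if_pos rfl, if_pos rfl]
        have := hcomp_ik y (Finset.mem_inter.2 ⟨hyb, hya⟩)
        tauto
      · rw [if_neg (Ne.symm hik), if_neg (Ne.symm hjk), if_pos rfl, if_neg (Ne.symm hij),
          if_pos rfl]
        have := hcomp_jk y (Finset.mem_inter.2 ⟨hyb, hya⟩)
        tauto
      · exact absurd rfl hab

lemma pair_insert_iff [DecidableEq α] {l : List α} {p : ℕ} {x u w : α} (hx : x ∉ l)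
    (hu : u ≠ x) (hw : w ≠ x) :
    [u, w] <+ (l.take p ++ x :: l.drop p) ↔ [u, w] <+ l := by
  constructor
  · intro h
    have h2 := sublist_remove (s := [u, w]) (by simp [Ne.symm hu, Ne.symm hw]) h
    rwa [List.take_append_drop] at h2
  · intro h
    refine h.trans ?_
    have h3 : l.take p ++ l.drop p <+ l.take p ++ x :: l.drop p :=
      List.Sublist.append (List.Sublist.refl _) (List.sublist_cons_self x _)
    rwa [List.take_append_drop] at h3

end Stmt14Aux

open Stmt14Aux

theorem stmt14 (v : ℕ) (B : List (Finset (Fin v)))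
    (hpair : ∀ x y : Fin v, x ≠ y →
      (B : Multiset (Finset (Fin v))).countP (fun b => x ∈ b ∧ y ∈ b) ≤ 2)
    (hfreq : ∀ x : Fin v, (B : Multiset (Finset (Fin v))).countP (fun b => x ∈ b) ≤ 3) :
    ∃ T : List (List (Fin v)),
      List.Forall₂ (fun (L : List (Fin v)) (b : Finset (Fin v)) =>
        L.Nodup ∧ L.toFinset = b) T B ∧
      ∀ x y : Fin v, x ≠ y →
        (T : Multiset (List (Fin v))).countP (fun L => List.Sublist [x, y] L) ≤ 1 := by
  classical
  suffices H : ∀ (N : ℕ) (C : List (Finset (Fin v))),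
      (C.map Finset.card).sum ≤ N →
      (∀ x y : Fin v, x ≠ y → C.countP (fun b => decide (x ∈ b ∧ y ∈ b)) ≤ 2) →
      (∀ x : Fin v, C.countP (fun b => decide (x ∈ b)) ≤ 3) →
      ∃ T : List (List (Fin v)),
        List.Forall₂ (fun (L : List (Fin v)) (b : Finset (Fin v)) =>
          L.Nodup ∧ L.toFinset = b) T C ∧
        ∀ u w : Fin v, u ≠ w → T.countP (fun L => decide ([u, w] <+ L)) ≤ 1 by
    obtain ⟨T, h1, h2⟩ := H ((B.map Finset.card).sum) B le_rfl
      (fun x y hxy => by have := hpair x y hxy; rwa [coe_countP] at this)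
      (fun x => by have := hfreq x; rwa [coe_countP] at this)
    refine ⟨T, h1, fun x y hxy => ?_⟩
    rw [coe_countP]
    exact h2 x y hxy
  have hempty : ∀ (C : List (Finset (Fin v))), (∀ b ∈ C, b = ∅) →
      ∃ T : List (List (Fin v)),
        List.Forall₂ (fun (L : List (Fin v)) (b : Finset (Fin v)) =>
          L.Nodup ∧ L.toFinset = b) T C ∧
        ∀ u w : Fin v, u ≠ w → T.countP (fun L => decide ([u, w] <+ L)) ≤ 1 := by
    intro C hC
    refine ⟨C.map (fun _ => []), ?_, ?_⟩
    · rw [List.forall₂_iff_get]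
      refine ⟨by simp, ?_⟩
      intro n h1 h2
      simp only [List.get_eq_getElem, List.getElem_map]
      exact ⟨List.nodup_nil, by
        simp only [List.toFinset_nil]
        exact (hC _ (List.getElem_mem _)).symm⟩
    · intro u w huw
      have h0 : (C.map fun _ => ([] : List (Fin v))).countP
          (fun L => decide ([u, w] <+ L)) = 0 := by
        apply List.countP_eq_zero.2
        intro a ha
        simp only [List.mem_map] at ha
        obtain ⟨-, -, rfl⟩ := ha
        simp
      omega
  intro N
  induction N with
  | zero =>
    intro C hsum hp hf
    refine hempty C ?_
    intro b hb
    have h1 : b.card ≤ 0 := le_trans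
      (List.single_le_sum (fun _ _ => Nat.zero_le _) _ (List.mem_map_of_mem (f := Finset.card) hb))
      hsum
    exact Finset.card_eq_zero.1 (by omega)
  | succ N ih =>
    intro C hsum hp hf
    by_cases hex : ∀ b ∈ C, b = ∅
    · exact hempty C hex
    push_neg at hex
    obtain ⟨b0, hb0C, hb0ne⟩ := hex
    obtain ⟨x, hxb0⟩ := hb0ne
    have hcard_lt : ((C.map (fun b => b.erase x)).map Finset.card).sum <
        (C.map Finset.card).sum := by
      obtain ⟨s, t, rfl⟩ := List.append_of_mem hb0C
      have hs : ((s.map (fun b => b.erase x)).map Finset.card).sum ≤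
          (s.map Finset.card).sum := by
        rw [List.map_map]
        exact List.sum_le_sum (fun b _ => by
          simp only [Function.comp_apply]
          exact Finset.card_erase_le)
      have ht : ((t.map (fun b => b.erase x)).map Finset.card).sum ≤
          (t.map Finset.card).sum := by
        rw [List.map_map]
        exact List.sum_le_sum (fun b _ => by
          simp only [Function.comp_apply]
          exact Finset.card_erase_le)
      have hmid : (b0.erase x).card < b0.card := by
        rw [Finset.card_erase_of_mem hxb0]
        have := Finset.card_pos.2 ⟨x, hxb0⟩
        omega
      simp only [List.map_append, List.map_cons, List.sum_append, List.sum_cons] at hs ht ⊢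
      omega
    have hsum' : ((C.map (fun b => b.erase x)).map Finset.card).sum ≤ N := by omega
    have hp' : ∀ y z : Fin v, y ≠ z →
        (C.map (fun b => b.erase x)).countP (fun b => decide (y ∈ b ∧ z ∈ b)) ≤ 2 := by
      intro y z hyz
      rw [List.countP_map]
      refine le_trans (List.countP_mono_left ?_) (hp y z hyz)
      intro b _ hbp
      simp only [Function.comp_apply, decide_eq_true_eq] at hbp ⊢
      exact ⟨(Finset.mem_erase.1 hbp.1).2, (Finset.mem_erase.1 hbp.2).2⟩
    have hf' : ∀ y : Fin v,
        (C.map (fun b => b.erase x)).countP (fun b => decide (y ∈ b)) ≤ 3 := by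
      intro y
      rw [List.countP_map]
      refine le_trans (List.countP_mono_left ?_) (hf y)
      intro b _ hbp
      simp only [Function.comp_apply, decide_eq_true_eq] at hbp ⊢
      exact (Finset.mem_erase.1 hbp).2
    obtain ⟨T', hF', hIH'⟩ := ih (C.map (fun b => b.erase x)) hsum' hp' hf'
    rw [List.forall₂_iff_get] at hF'
    obtain ⟨hlen', hget'⟩ := hF'
    have hlenT' : T'.length = C.length := by simpa using hlen'
    have hFn : ∀ i, i < C.length →
        (T'[i]!).Nodup ∧ (T'[i]!).toFinset = (C[i]!).erase x := by
      intro i hi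
      have h1 : i < T'.length := by omega
      have h2 : i < (C.map (fun b => b.erase x)).length := by simpa using hi
      have h3 := hget' i h1 h2
      simp only [List.get_eq_getElem, List.getElem_map] at h3
      rw [getElem!_pos T' i h1, getElem!_pos C i hi]
      exact h3
    obtain ⟨pos, hposle, hposkey⟩ := expos x C T' hlenT' hFn
      (fun y hyx => hp x y (Ne.symm hyx)) (hf x) hIH'
    set T := (List.range C.length).map
      (fun i => if x ∈ C[i]! then (T'[i]!).insertIdx (pos i) x else T'[i]!) with hTdef
    have hlenT : T.length = C.length := by simp [hTdef]
    have hTget : ∀ i, i < C.length →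
        T[i]! = if x ∈ C[i]! then (T'[i]!).insertIdx (pos i) x else T'[i]! := by
      intro i hi
      have h1 : i < T.length := by omega
      rw [getElem!_pos T i h1]
      simp only [hTdef, List.getElem_map, List.getElem_range]
    have hxnot : ∀ i, i < C.length → x ∉ T'[i]! := by
      intro i hi
      rw [← List.mem_toFinset, (hFn i hi).2]
      simp
    have hTget2 : ∀ i, i < C.length → x ∈ C[i]! →
        T[i]! = (T'[i]!).take (pos i) ++ x :: (T'[i]!).drop (pos i) := by
      intro i hi hx
      rw [hTget i hi, if_pos hx]
      exact insertIdx_eq x (pos i) _ (hposle i hi hx)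
    refine ⟨T, ?_, ?_⟩
    · rw [List.forall₂_iff_get]
      refine ⟨by omega, ?_⟩
      intro n h1 h2
      simp only [List.get_eq_getElem]
      rw [← getElem!_pos T n h1, ← getElem!_pos C n h2]
      rw [hTget n h2]
      by_cases hx : x ∈ C[n]!
      · rw [if_pos hx]
        have hperm : ((T'[n]!).insertIdx (pos n) x).Perm (x :: T'[n]!) :=
          List.perm_insertIdx x _ (hposle n h2 hx)
        constructor
        · rw [hperm.nodup_iff, List.nodup_cons]
          exact ⟨hxnot n h2, (hFn n h2).1⟩
        · rw [List.toFinset_eq_of_perm _ _ hperm]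
          simp only [List.toFinset_cons]
          rw [(hFn n h2).2]
          exact Finset.insert_erase hx
      · rw [if_neg hx]
        refine ⟨(hFn n h2).1, ?_⟩
        rw [(hFn n h2).2]
        exact Finset.erase_eq_of_notMem hx
    · intro u w huw
      have hwmem : ∀ a y, a < C.length → y ∈ T'[a]! → y ∈ (C[a]!).erase x := by
        intro a y ha hy
        rw [← (hFn a ha).2, List.mem_toFinset]
        exact hy
      by_cases hu : u = x
      · subst hu
        apply countP_le_one
        intro i j hi hj hpi hpj
        rw [hlenT] at hi hj
        simp only [decide_eq_true_eq] at hpi hpj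
        have key : ∀ a, a < C.length → [u, w] <+ T[a]! →
            u ∈ C[a]! ∧ w ∈ (T'[a]!).drop (pos a) := by
          intro a ha hsub
          by_cases hxa : u ∈ C[a]!
          · refine ⟨hxa, ?_⟩
            rw [hTget2 a ha hxa] at hsub
            exact (pair_x_right (hxnot a ha) (Ne.symm huw)).1 hsub
          · rw [hTget a ha, if_neg hxa] at hsub
            exact absurd (hsub.subset (by simp)) (hxnot a ha)
        obtain ⟨hxi', hwi⟩ := key i hi hpi
        obtain ⟨hxj', hwj⟩ := key j hj hpj
        by_contra hne
        have hiff := hposkey i j hi hj hne hxi' hxj' w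
          (hwmem i w hi (List.drop_subset _ _ hwi)) (hwmem j w hj (List.drop_subset _ _ hwj))
        exact (hiff.1 hwi) hwj
      · by_cases hw : w = x
        · subst hw
          apply countP_le_one
          intro i j hi hj hpi hpj
          rw [hlenT] at hi hj
          simp only [decide_eq_true_eq] at hpi hpj
          have key : ∀ a, a < C.length → [u, w] <+ T[a]! →
              w ∈ C[a]! ∧ u ∈ (T'[a]!).take (pos a) := by
            intro a ha hsub
            by_cases hxa : w ∈ C[a]!
            · refine ⟨hxa, ?_⟩
              rw [hTget2 a ha hxa] at hsub
              exact (pair_x_left (hxnot a ha) hu).1 hsub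
            · rw [hTget a ha, if_neg hxa] at hsub
              exact absurd (hsub.subset (by simp)) (hxnot a ha)
          obtain ⟨hxi', hui⟩ := key i hi hpi
          obtain ⟨hxj', huj⟩ := key j hj hpj
          by_contra hne
          have hui' : u ∈ T'[i]! := List.take_subset _ _ hui
          have huj' : u ∈ T'[j]! := List.take_subset _ _ huj
          have hiff := hposkey i j hi hj hne hxi' hxj' u
            (hwmem i u hi hui') (hwmem j u hj huj')
          have h1 : u ∉ (T'[i]!).drop (pos i) :=
            fun hd => ((mem_drop_iff_not_mem_take (hFn i hi).1 hui').1 hd) hui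
          have h2 : u ∉ (T'[j]!).drop (pos j) :=
            fun hd => ((mem_drop_iff_not_mem_take (hFn j hj).1 huj').1 hd) huj
          exact h1 (hiff.2 h2)
        · have hcong : T.countP (fun L => decide ([u, w] <+ L)) =
              T'.countP (fun L => decide ([u, w] <+ L)) := by
            apply countP_congr_two _ _ (by omega)
            intro i hi
            rw [hlenT] at hi
            apply decide_eq_decide.2
            by_cases hx : x ∈ C[i]!
            · rw [hTget2 i hi hx]
              exact pair_insert_iff (hxnot i hi) hu hw
            · rw [hTget i hi, if_neg hx]
          rw [hcong]
          exact hIH' u w huw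
end

section
/- Let v, n, q, r, λ be nonnegative integers with q ≥ 1, 0 ≤ r < v, and let N_1, …, N_n be nonnegative integers with Σ_{i=1}^n N_i ≤ v and Σ_{i=1}^n i·N_i = q·v + r. Then Σ_{i=1}^n C(i, λ+1)·N_i ≥ v·C(q, λ+1) + r·C(q, λ), provided n ≥ q+1. -/
lemma lemA17 (q lam d : ℕ) :
    q.choose (lam+1) + d * q.choose lam ≤ (q+d).choose (lam+1) := by
  induction d with
  | zero => simp
  | succ d ih =>
    have h1 : q.choose lam ≤ (q+d).choose lam :=
      Nat.choose_le_choose lam (Nat.le_add_right q d)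
    have h2 : (q+(d+1)).choose (lam+1)
        = (q+d).choose lam + (q+d).choose (lam+1) := by
      rw [show q+(d+1) = (q+d)+1 from rfl, Nat.choose_succ_succ]
    rw [h2, Nat.succ_mul]
    omega

lemma lemB17 (q lam : ℕ) : ∀ d, d ≤ q →
    q.choose (lam+1) ≤ (q-d).choose (lam+1) + d * q.choose lam := by
  intro d
  induction d with
  | zero => simp
  | succ d ih =>
    intro hd
    have ih' := ih (by omega)
    have h1 : (q-(d+1)).choose lam ≤ q.choose lam :=
      Nat.choose_le_choose lam (by omega)
    have h2 : (q-d).choose (lam+1)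
        = (q-(d+1)).choose lam + (q-(d+1)).choose (lam+1) := by
      rw [show q-d = (q-(d+1))+1 by omega, Nat.choose_succ_succ]
    rw [Nat.succ_mul]
    omega

lemma key17 (q lam i : ℕ) :
    (q.choose (lam+1) : ℤ) + ((i:ℤ) - q) * q.choose lam ≤ i.choose (lam+1) := by
  rcases le_or_gt q i with h | h
  · obtain ⟨d, rfl⟩ := Nat.exists_eq_add_of_le h
    have := lemA17 q lam d
    have := (Nat.cast_le (α := ℤ)).mpr this
    push_cast at this ⊢
    linarith
  · have hd : q - i ≤ q := Nat.sub_le _ _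
    have := lemB17 q lam (q - i) hd
    rw [show q - (q - i) = i by omega] at this
    have := (Nat.cast_le (α := ℤ)).mpr this
    push_cast [Nat.cast_sub h.le] at this
    linarith

theorem stmt17 (v n q r lam : ℕ) (N : ℕ → ℕ) (hq : 1 ≤ q) (hr : r < v) (hn : q + 1 ≤ n)
    (h1 : ∑ i ∈ Finset.Icc 1 n, N i ≤ v)
    (h2 : ∑ i ∈ Finset.Icc 1 n, i * N i = q * v + r) :
    v * q.choose (lam + 1) + r * q.choose lam
      ≤ ∑ i ∈ Finset.Icc 1 n, i.choose (lam + 1) * N i := by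
  have key := key17 q lam
  -- work in ℤ
  rw [← Nat.cast_le (α := ℤ)]
  push_cast
  set C1 : ℤ := (q.choose (lam+1) : ℤ) with hC1
  set C0 : ℤ := (q.choose lam : ℤ) with hC0
  have hS : (∑ i ∈ Finset.Icc 1 n, (N i : ℤ)) ≤ v := by exact_mod_cast h1
  have hT : (∑ i ∈ Finset.Icc 1 n, (i : ℤ) * N i) = q * v + r := by exact_mod_cast h2
  have hC : C1 ≤ q * C0 := by
    have := lemB17 q lam q le_rfl
    simp at this
    rw [hC1, hC0]
    exact_mod_cast this
  have step1 : ∑ i ∈ Finset.Icc 1 n,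
      (C1 * N i + ((i:ℤ) * N i) * C0 - (q:ℤ) * C0 * N i)
      ≤ ∑ i ∈ Finset.Icc 1 n, (i.choose (lam+1) : ℤ) * N i := by
    apply Finset.sum_le_sum
    intro i _
    have hN : (0:ℤ) ≤ N i := Int.natCast_nonneg _
    have h := mul_le_mul_of_nonneg_right (key i) hN
    calc C1 * N i + ((i:ℤ) * N i) * C0 - (q:ℤ) * C0 * N i
        = (C1 + ((i:ℤ) - q) * C0) * N i := by ring
      _ ≤ (i.choose (lam+1) : ℤ) * N i := h
  have split : ∑ i ∈ Finset.Icc 1 n,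
      (C1 * N i + ((i:ℤ) * N i) * C0 - (q:ℤ) * C0 * N i)
      = C1 * (∑ i ∈ Finset.Icc 1 n, (N i : ℤ))
        + (∑ i ∈ Finset.Icc 1 n, (i:ℤ) * N i) * C0
        - (q:ℤ) * C0 * (∑ i ∈ Finset.Icc 1 n, (N i : ℤ)) := by
    rw [Finset.sum_sub_distrib, Finset.sum_add_distrib, ← Finset.mul_sum,
      ← Finset.sum_mul, ← Finset.mul_sum]
  rw [split, hT] at step1
  set S : ℤ := ∑ i ∈ Finset.Icc 1 n, (N i : ℤ)
  nlinarith [mul_nonneg (sub_nonneg.mpr hS) (sub_nonneg.mpr hC)]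
end
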